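/- arXiv:2008.03942 — 10 statements merged into one kernel-verified Lean document; each statement's English description precedes it below -/
import Mathlib

section
/- Let β, s, μ > 0, let P ≥ 1, and let ν ∈ ℝ^P. If x* minimizes F(x) = −β·log(Σᵢ xᵢ) + s/(Σᵢ xᵢ) + (μ/2)·‖x − ν‖² over the set {x ∈ ℝ^P : xᵢ ≥ 0 for all i, and Σᵢ xᵢ > 0}, then there exists ζ > 0 such that x*ᵢ = max(0, νᵢ + ζ) for every i, and μζ = β/S + s/S² where S = Σᵢ max(0, νᵢ + ζ). -/
open Finset

/-- Lemma 1 of the paper: characterization of the minimizer of the x-subproblem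
of the ADMM for NUM, with utility `U(t) = β log t − s/t`. -/
theorem stmt0 (β s μ : ℝ) (hβ : 0 < β) (hs : 0 < s) (hμ : 0 < μ)
    (P : ℕ) (hP : 1 ≤ P) (ν : Fin P → ℝ) (xstar : Fin P → ℝ)
    (hpos : ∀ i, 0 ≤ xstar i) (hsum : 0 < ∑ i, xstar i)
    (hmin : ∀ x : Fin P → ℝ, (∀ i, 0 ≤ x i) → 0 < ∑ i, x i →
      (-β * Real.log (∑ i, xstar i) + s / (∑ i, xstar i)
          + (μ / 2) * ∑ i, (xstar i - ν i) ^ 2)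
        ≤ (-β * Real.log (∑ i, x i) + s / (∑ i, x i)
          + (μ / 2) * ∑ i, (x i - ν i) ^ 2)) :
    ∃ ζ : ℝ, 0 < ζ ∧ (∀ i, xstar i = max 0 (ν i + ζ)) ∧
      μ * ζ = β / (∑ i, max 0 (ν i + ζ)) + s / (∑ i, max 0 (ν i + ζ)) ^ 2 := by
  set S := ∑ i, xstar i with hSdef
  have hS : 0 < S := hsum
  have hSne : S ≠ 0 := ne_of_gt hS
  set ζ : ℝ := (β / S + s / S ^ 2) / μ with hζdef
  have hζpos : 0 < ζ := by positivity
  have hμζ : μ * ζ = β / S + s / S ^ 2 := by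
    rw [hζdef]; field_simp
  -- key coordinate-wise characterization
  have key : ∀ i, xstar i = max 0 (ν i + ζ) := by
    intro i
    have hsplit : ∀ f : Fin P → ℝ, ∑ j, f j = f i + ∑ j ∈ univ.erase i, f j :=
      fun f => (Finset.add_sum_erase univ f (mem_univ i)).symm
    set a : ℝ := xstar i - ν i with hadef
    set C : ℝ := ∑ j ∈ univ.erase i, (xstar j - ν j) ^ 2 with hCdef
    set g : ℝ → ℝ := fun t => -β * Real.log (S + t) + s / (S + t)
      + (μ / 2) * ((a + t) ^ 2 + C) with hgdef
    set d : ℝ := μ * a - (β / S + s / S ^ 2) with hddef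
    -- derivative of g at 0
    have h1 : HasDerivAt (fun t : ℝ => S + t) 1 0 := (hasDerivAt_id 0).const_add S
    have hS0 : S + 0 ≠ 0 := by simpa using hSne
    have hg : HasDerivAt g d 0 := by
      have hlog : HasDerivAt (fun t : ℝ => Real.log (S + t)) (1 / (S + 0)) 0 :=
        h1.log hS0
      have hdiv : HasDerivAt (fun t : ℝ => s / (S + t))
          ((0 * (S + 0) - s * 1) / (S + 0) ^ 2) 0 :=
        (hasDerivAt_const 0 s).div h1 hS0
      have hsq : HasDerivAt (fun t : ℝ => (a + t) ^ 2) (2 * (a + 0)) 0 := by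
        have := ((hasDerivAt_id 0).const_add a).fun_pow 2
        simpa using this
      have := ((hlog.const_mul (-β)).add hdiv).add
        (((hsq.add_const C)).const_mul (μ / 2))
      refine this.congr_deriv ?_
      rw [hddef]
      field_simp
      ring
    -- g t equals the objective at update xstar i (xstar i + t)
    have hgF : ∀ t : ℝ, -xstar i ≤ t → 0 < S + t → g 0 ≤ g t := by
      intro t ht hSt
      set x' : Fin P → ℝ := Function.update xstar i (xstar i + t) with hx'def
      have hx'i : x' i = xstar i + t := Function.update_self i _ xstar
      have hx'ne : ∀ j ∈ univ.erase i, x' j = xstar j := fun j hj =>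
        Function.update_of_ne (Finset.ne_of_mem_erase hj) _ xstar
      have hx'pos : ∀ j, 0 ≤ x' j := by
        intro j
        rcases eq_or_ne j i with rfl | hne
        · rw [hx'i]; linarith
        · rw [hx'def]; rw [Function.update_of_ne hne]; exact hpos j
      have hsum' : ∑ j, x' j = S + t := by
        have e1 := hsplit x'
        have e2 := hsplit xstar
        have e3 : ∑ j ∈ univ.erase i, x' j = ∑ j ∈ univ.erase i, xstar j :=
          Finset.sum_congr rfl hx'ne
        rw [← hSdef] at e2
        rw [e1, e3, hx'i]
        linarith
      have hsq' : ∑ j, (x' j - ν j) ^ 2 = (a + t) ^ 2 + C := by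
        have e1 := hsplit (fun j => (x' j - ν j) ^ 2)
        have e3 : ∑ j ∈ univ.erase i, (x' j - ν j) ^ 2 = C :=
          Finset.sum_congr rfl fun j hj => by rw [hx'ne j hj]
        rw [e1, e3, hx'i, hadef]
        ring
      have hsqstar : ∑ j, (xstar j - ν j) ^ 2 = a ^ 2 + C := by
        have e1 := hsplit (fun j => (xstar j - ν j) ^ 2)
        rw [e1, hadef]
      have hle := hmin x' hx'pos (by rw [hsum']; exact hSt)
      rw [hsum', hsq'] at hle
      simp only [hgdef]
      rw [add_zero]
      calc -β * Real.log S + s / S + μ / 2 * ((a + 0) ^ 2 + C)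
          = -β * Real.log S + s / S + μ / 2 * ∑ j, (xstar j - ν j) ^ 2 := by
            rw [hsqstar]; ring_nf
        _ ≤ -β * Real.log (S + t) + s / (S + t) + μ / 2 * ((a + t) ^ 2 + C) := hle
    rcases eq_or_lt_of_le (hpos i) with hzero | hxi
    · -- boundary case: xstar i = 0, one-sided derivative gives d ≥ 0
      have hgW : HasDerivWithinAt g d (Set.Ioi 0) 0 := hg.hasDerivWithinAt
      have hslope := hasDerivWithinAt_iff_tendsto_slope.mp hgW
      have hIoi : (Set.Ioi (0:ℝ)) \ {0} = Set.Ioi 0 :=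
        Set.diff_singleton_eq_self (by simp)
      rw [hIoi] at hslope
      have hd : 0 ≤ d := by
        refine ge_of_tendsto hslope ?_
        filter_upwards [self_mem_nhdsWithin] with t ht
        have ht' : (0:ℝ) < t := ht
        have hgt := hgF t (by linarith) (by linarith)
        rw [slope_def_field]
        apply div_nonneg <;> linarith
      have hνζ : ν i + ζ ≤ 0 := by
        have hμa : μ * ζ ≤ μ * a := by
          rw [hμζ]; rw [hddef] at hd; linarith
        have : ζ ≤ a := le_of_mul_le_mul_left hμa hμ
        rw [hadef, ← hzero] at this
        linarith
      rw [← hzero, max_eq_left hνζ]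
    · -- interior case: xstar i > 0, derivative vanishes
      have hloc : IsLocalMin g 0 := by
        rw [IsLocalMin, IsMinFilter, Metric.eventually_nhds_iff]
        refine ⟨min (xstar i) S, by positivity, ?_⟩
        intro t ht
        rw [Real.dist_eq, sub_zero] at ht
        have h1 := abs_lt.mp (lt_of_lt_of_le ht (min_le_left _ _))
        have h2 := abs_lt.mp (lt_of_lt_of_le ht (min_le_right _ _))
        exact hgF t (by linarith [h1.1]) (by linarith [h2.1])
      have hd0 : d = 0 := hloc.hasDerivAt_eq_zero hg
      have ha : a = ζ := by
        have h5 : μ * a = β / S + s / S ^ 2 := by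
          rw [hddef] at hd0; linarith
        exact mul_left_cancel₀ (ne_of_gt hμ) (h5.trans hμζ.symm)
      have hx : xstar i = ν i + ζ := by rw [hadef] at ha; linarith
      rw [hx, max_eq_right]
      linarith
  refine ⟨ζ, hζpos, key, ?_⟩
  have hSeq : ∑ i, max 0 (ν i + ζ) = S := by
    rw [hSdef]
    exact (Finset.sum_congr rfl fun i _ => (key i).symm)
  rw [hSeq]; exact hμζ
end

section
/- Let β, s, μ > 0, let P ≥ 1, and let ν ∈ ℝ^P. Define S(ζ) = Σᵢ max(0, νᵢ + ζ). Then there exists a unique ζ > 0 such that S(ζ) > 0 and μ·ζ·S(ζ)² = β·S(ζ) + s (equivalently, μζ = β/S(ζ) + s/S(ζ)²). -/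
open Finset

/-- Abstract version: existence and uniqueness for a continuous nondecreasing
nonnegative `S` with linear upper bound and eventual lower bound 1. -/
theorem stmt1_aux (β s μ : ℝ) (hβ : 0 < β) (hs : 0 < s) (hμ : 0 < μ)
    (S : ℝ → ℝ) (hcont : Continuous S) (hmono : Monotone S)
    (hnn : ∀ ζ, 0 ≤ S ζ) (C : ℝ) (hC : 1 ≤ C)
    (hub : ∀ ζ, 0 ≤ ζ → ζ ≤ 1 → S ζ ≤ C)
    (a : ℝ) (hlb : ∀ ζ, a ≤ ζ → 1 ≤ S ζ) :
    ∃! ζ : ℝ, 0 < ζ ∧ 0 < S ζ ∧ μ * ζ * (S ζ) ^ 2 = β * S ζ + s := by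
  have hC0 : 0 < C := lt_of_lt_of_le one_pos hC
  set F : ℝ → ℝ := fun ζ => μ * ζ * (S ζ) ^ 2 - β * S ζ - s with hF
  have hFcont : Continuous F :=
    (((continuous_const.mul continuous_id).mul (hcont.pow 2)).sub
      (continuous_const.mul hcont)).sub continuous_const
  -- small point
  set ζ₁ : ℝ := min 1 (s / (2 * μ * C ^ 2)) with hζ₁
  have hden : 0 < 2 * μ * C ^ 2 := by positivity
  have hζ₁pos : 0 < ζ₁ := lt_min one_pos (by positivity)
  have hζ₁le1 : ζ₁ ≤ 1 := min_le_left _ _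
  have hζ₁le : ζ₁ ≤ s / (2 * μ * C ^ 2) := min_le_right _ _
  have hSζ₁ : S ζ₁ ≤ C := hub ζ₁ hζ₁pos.le hζ₁le1
  have hF1 : F ζ₁ ≤ 0 := by
    have hsq : (S ζ₁) ^ 2 ≤ C ^ 2 := by nlinarith [hnn ζ₁]
    have h1 : μ * ζ₁ * (S ζ₁) ^ 2 ≤ μ * ζ₁ * C ^ 2 := by
      nlinarith [mul_pos hμ hζ₁pos]
    have h2 : μ * ζ₁ * C ^ 2 ≤ s / 2 := by
      rw [le_div_iff₀ hden] at hζ₁le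
      nlinarith
    have h3 : 0 ≤ β * S ζ₁ := mul_nonneg hβ.le (hnn ζ₁)
    simp only [hF]
    nlinarith
  -- large point
  set b : ℝ := max (max 1 a) ((β + s) / μ) with hb
  have hb1 : (1 : ℝ) ≤ b := le_trans (le_max_left 1 a) (le_max_left _ _)
  have hba : a ≤ b := le_trans (le_max_right 1 a) (le_max_left _ _)
  have hbμ : β + s ≤ μ * b := by
    have := le_max_right (max 1 a) ((β + s) / μ)
    rw [div_le_iff₀ hμ] at this
    linarith
  have hSb : 1 ≤ S b := hlb b hba
  have hFb : 0 ≤ F b := by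
    simp only [hF]
    nlinarith [sq_nonneg (S b - 1), sq_nonneg (S b)]
  have hζ₁b : ζ₁ ≤ b := le_trans hζ₁le1 hb1
  obtain ⟨c, hcmem, hFc⟩ := intermediate_value_Icc hζ₁b hFcont.continuousOn ⟨hF1, hFb⟩
  have hc0 : 0 < c := lt_of_lt_of_le hζ₁pos hcmem.1
  have heqc : μ * c * (S c) ^ 2 = β * S c + s := by
    have : F c = 0 := hFc
    simp only [hF] at this
    linarith
  have hSc : 0 < S c := by
    by_contra h
    have h0 : S c = 0 := le_antisymm (not_lt.mp h) (hnn c)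
    rw [h0] at heqc
    nlinarith
  -- uniqueness helper
  have key : ∀ x y : ℝ, 0 < x → 0 < S x → μ * x * (S x) ^ 2 = β * S x + s →
      0 < y → 0 < S y → μ * y * (S y) ^ 2 = β * S y + s → x < y → False := by
    intro x y hx hSx hex hy hSy hey hxy
    have hSxy : S x ≤ S y := hmono hxy.le
    have h1 : μ * x * (S x) ^ 2 * (S y) ^ 2 = (β * S x + s) * (S y) ^ 2 := by
      rw [hex]
    have h2 : μ * y * (S y) ^ 2 * (S x) ^ 2 = (β * S y + s) * (S x) ^ 2 := by
      rw [hey]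
    nlinarith [mul_pos (mul_pos hSx hSx) (mul_pos hSy hSy),
      mul_pos hμ (sub_pos.mpr hxy), mul_pos hSx hSy,
      mul_nonneg (mul_nonneg hβ.le (mul_pos hSx hSy).le) (sub_nonneg.mpr hSxy),
      mul_nonneg hs.le (mul_nonneg (sub_nonneg.mpr hSxy) (by linarith : (0:ℝ) ≤ S x + S y))]
  refine ⟨c, ⟨hc0, hSc, heqc⟩, ?_⟩
  rintro y ⟨hy0, hSy, heqy⟩
  rcases lt_trichotomy y c with h | h | h
  · exact absurd (key y c hy0 hSy heqy hc0 hSc heqc h) not_false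
  · exact h
  · exact absurd (key c y hc0 hSc heqc hy0 hSy heqy h) not_false

/-- Existence and uniqueness of the multiplier ζ in the stationarity equation
`μ ζ S(ζ)² = β S(ζ) + s` with `S(ζ) = Σᵢ max(0, νᵢ + ζ)` (Lemma 1 of the paper). -/
theorem stmt1 (β s μ : ℝ) (hβ : 0 < β) (hs : 0 < s) (hμ : 0 < μ)
    (P : ℕ) (hP : 1 ≤ P) (ν : Fin P → ℝ) :
    ∃! ζ : ℝ, 0 < ζ ∧ 0 < (∑ i, max 0 (ν i + ζ)) ∧
      μ * ζ * (∑ i, max 0 (ν i + ζ)) ^ 2 = β * (∑ i, max 0 (ν i + ζ)) + s := by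
  set S : ℝ → ℝ := fun ζ => ∑ i, max 0 (ν i + ζ) with hS
  have hcont : Continuous S := by
    apply continuous_finset_sum
    intro i _
    exact continuous_const.max (continuous_const.add continuous_id)
  have hmono : Monotone S := by
    intro x y hxy
    exact Finset.sum_le_sum fun i _ => max_le_max le_rfl (by linarith)
  have hnn : ∀ ζ, 0 ≤ S ζ := fun ζ => Finset.sum_nonneg fun i _ => le_max_left _ _
  have hub : ∀ ζ, 0 ≤ ζ → ζ ≤ 1 → S ζ ≤ S 1 := fun ζ _ h => hmono h
  have hC : 1 ≤ max 1 (S 1) := le_max_left _ _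
  have i0 : Fin P := ⟨0, hP⟩
  set a : ℝ := 1 - ν i0 with ha
  have hlb : ∀ ζ, a ≤ ζ → 1 ≤ S ζ := by
    intro ζ hζ
    have h1 : max 0 (ν i0 + ζ) ≤ S ζ := by
      show max 0 (ν i0 + ζ) ≤ ∑ i, max 0 (ν i + ζ)
      exact Finset.single_le_sum (f := fun i => max 0 (ν i + ζ)) (fun i _ => le_max_left _ _) (Finset.mem_univ i0)
    have h2 : (1 : ℝ) ≤ ν i0 + ζ := by simp only [ha] at hζ; linarith
    calc (1:ℝ) ≤ ν i0 + ζ := h2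
      _ ≤ max 0 (ν i0 + ζ) := le_max_right _ _
      _ ≤ S ζ := h1
  exact stmt1_aux β s μ hβ hs hμ S hcont hmono hnn (max 1 (S 1)) hC
    (fun ζ h0 h1 => le_trans (hub ζ h0 h1) (le_max_right _ _)) a hlb
end

section
/- Let β, s, μ > 0, let P ≥ 1, let ν ∈ ℝ^P, and let i* be an index at which νᵢ attains its maximum. Consider minimizing F(x) = −β·log(Σᵢ xᵢ) + s/(Σᵢ xᵢ) + (μ/2)·‖x − ν‖² over the set {x ∈ ℝ^P : xᵢ ≥ 0 for all i, at most one coordinate of x is nonzero, and Σᵢ xᵢ > 0}. Then this problem has a global minimizer x* with x*ⱼ = 0 for all j ≠ i* and x*_{i*} equal to the largest real root of the cubic equation μ·a³ − μ·ν_{i*}·a² − β·a − s = 0. -/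
open Set

lemma scalar_min (β s μ ν0 : ℝ) (hβ : 0 < β) (hs : 0 < s) (hμ : 0 < μ) :
    ∃ a : ℝ, 0 < a ∧ (∀ t, 0 < t →
      (-β * Real.log a + s / a + (μ/2) * (a - ν0)^2)
        ≤ (-β * Real.log t + s / t + (μ/2) * (t - ν0)^2)) ∧
      μ * a^3 - μ * ν0 * a^2 - β * a - s = 0 ∧
      (∀ b : ℝ, μ * b^3 - μ * ν0 * b^2 - β * b - s = 0 → b ≤ a) := by
  set g : ℝ → ℝ := fun t => -β * Real.log t + s / t + (μ/2) * (t - ν0)^2 with hg_def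
  set c : ℝ := |g 1| + 1 with hc_def
  have hc : 0 < c := by positivity
  set δ : ℝ := min 1 (s / c) with hδ_def
  have hδ0 : 0 < δ := lt_min one_pos (div_pos hs hc)
  have hδ1 : δ ≤ 1 := min_le_left _ _
  set U : ℝ := max 1 ((2/μ) * (β + β * |ν0| + c)) with hU_def
  have hU1 : 1 ≤ U := le_max_left _ _
  have hU2 : (2/μ) * (β + β * |ν0| + c) ≤ U := le_max_right _ _
  set M : ℝ := max 1 (ν0 + U) with hM_def
  have hM1 : 1 ≤ M := le_max_left _ _
  -- small t lower bound
  have hsmall : ∀ t, 0 < t → t ≤ 1 → s / t ≤ g t := by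
    intro t ht ht1
    have hlog : Real.log t ≤ 0 := Real.log_nonpos ht.le ht1
    have h1 : 0 ≤ -β * Real.log t := by nlinarith
    have h2 : 0 ≤ (μ/2) * (t - ν0)^2 := by positivity
    simp only [hg_def]; linarith
  -- large t lower bound
  have hbig : ∀ t, M ≤ t → c ≤ g t := by
    intro t htM
    have ht1 : 1 ≤ t := le_trans hM1 htM
    have ht0 : 0 < t := lt_of_lt_of_le one_pos ht1
    have hu : U ≤ t - ν0 := by
      have : ν0 + U ≤ t := le_trans (le_max_right _ _) htM
      linarith
    have hu1 : 1 ≤ t - ν0 := le_trans hU1 hu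
    have hlog : Real.log t ≤ t - 1 := Real.log_le_sub_one_of_pos ht0
    have hst : 0 < s / t := div_pos hs ht0
    have habs : ν0 ≤ |ν0| := le_abs_self _
    have hkey : β + β * |ν0| + c ≤ (μ/2) * (t - ν0) := by
      have heq : (μ/2) * ((2/μ) * (β + β * |ν0| + c)) = β + β * |ν0| + c := by
        field_simp
      calc β + β * |ν0| + c = (μ/2) * ((2/μ) * (β + β * |ν0| + c)) := heq.symm
        _ ≤ (μ/2) * (t - ν0) := by
            apply mul_le_mul_of_nonneg_left (le_trans hU2 hu) (by positivity)
    have hkey2 : (β + β * |ν0| + c) * (t - ν0) ≤ (μ/2) * (t - ν0)^2 := by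
      nlinarith [mul_le_mul_of_nonneg_right hkey (by linarith : (0:ℝ) ≤ t - ν0)]
    have hprod : 0 ≤ (β * |ν0| + c) * (t - ν0 - 1) := by
      apply mul_nonneg (by positivity) (by linarith)
    have hlogb : -β * Real.log t ≥ -β * (t - 1) := by nlinarith
    simp only [hg_def]
    nlinarith [hkey2, hprod, hst]
  -- minimizer on compact set
  have hKsub : Icc δ M ⊆ {x : ℝ | x ≠ 0} := fun x hx => ne_of_gt (lt_of_lt_of_le hδ0 hx.1)
  have hgcont : ContinuousOn g (Icc δ M) := by
    apply ContinuousOn.add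
    apply ContinuousOn.add
    · exact continuousOn_const.mul (Real.continuousOn_log.mono hKsub)
    · exact continuousOn_const.div continuousOn_id hKsub
    · exact (continuous_const.mul ((continuous_id.sub continuous_const).pow 2)).continuousOn
  have h1mem : (1:ℝ) ∈ Icc δ M := ⟨hδ1, hM1⟩
  obtain ⟨a, haK, hamin⟩ := isCompact_Icc.exists_isMinOn ⟨1, h1mem⟩ hgcont
  have ha0 : 0 < a := lt_of_lt_of_le hδ0 haK.1
  have hga1 : g a ≤ g 1 := hamin h1mem
  have hg1c : g 1 < c := by
    have := le_abs_self (g 1); simp only [hc_def]; linarith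
  -- global min
  have hglobal : ∀ t, 0 < t → g a ≤ g t := by
    intro t ht
    rcases le_or_gt δ t with h1 | h1
    · rcases le_or_gt t M with h2 | h2
      · exact hamin ⟨h1, h2⟩
      · linarith [hbig t h2.le]
    · have hts : s / δ < s / t := div_lt_div_of_pos_left hs ht h1
      have hsδ : c ≤ s / δ := by
        rw [le_div_iff₀ hδ0]
        calc c * δ ≤ c * (s / c) := by
              apply mul_le_mul_of_nonneg_left (min_le_right _ _) hc.le
          _ = s := mul_div_cancel₀ _ hc.ne'
      have h5 := hsmall t ht (le_trans h1.le hδ1)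
      exact hga1.trans (hg1c.le.trans (hsδ.trans (hts.le.trans h5)))
  -- stationarity
  have hlocal : IsLocalMin g a :=
    Filter.eventually_of_mem (isOpen_Ioi.mem_nhds ha0) (fun t ht => hglobal t ht)
  have hd1 : HasDerivAt (fun t : ℝ => -β * Real.log t) (-β * a⁻¹) a :=
    (Real.hasDerivAt_log ha0.ne').const_mul (-β)
  have hd2 : HasDerivAt (fun t : ℝ => s / t) (s * -(a^2)⁻¹) a := by
    simpa [div_eq_mul_inv] using (hasDerivAt_inv ha0.ne').const_mul s
  have hd3 : HasDerivAt (fun t : ℝ => (μ/2) * (t - ν0)^2) ((μ/2) * (2 * (a - ν0))) a := by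
    have := (((hasDerivAt_id a).sub_const ν0).pow 2).const_mul (μ/2)
    simpa using this
  have hderiv : HasDerivAt g (-β * a⁻¹ + s * -(a^2)⁻¹ + (μ/2) * (2 * (a - ν0))) a :=
    (hd1.add hd2).add hd3
  have hD0 : -β * a⁻¹ + s * -(a^2)⁻¹ + (μ/2) * (2 * (a - ν0)) = 0 :=
    hlocal.hasDerivAt_eq_zero hderiv
  have hcubic : μ * a^3 - μ * ν0 * a^2 - β * a - s = 0 := by
    field_simp at hD0
    have key : (2*a) * (μ * a^3 - μ * ν0 * a^2 - β * a - s) = 0 := by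
      linear_combination (2*a) * hD0
    rcases mul_eq_zero.1 key with h | h
    · exact absurd h (by positivity)
    · exact h
  refine ⟨a, ha0, hglobal, hcubic, ?_⟩
  intro b hb
  rcases le_or_gt b 0 with hb0 | hb0
  · linarith
  · have key : (b - a) * (μ * a^2 * b^2 + β * a * b + s * (a + b)) = 0 := by
      linear_combination a^2 * hb - b^2 * hcubic
    have hpos : 0 < μ * a^2 * b^2 + β * a * b + s * (a + b) := by positivity
    rcases mul_eq_zero.1 key with h | h
    · linarith
    · exact absurd h hpos.ne'


open Finset

/-- Lemma 2 of the paper: the cardinality-one case of the x-subproblem. The problem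
has a global minimizer supported on a coordinate `i*` where ν is maximal, whose value
is the largest real root of the cubic `μ a³ − μ ν_{i*} a² − β a − s = 0`. -/
theorem stmt4 (β s μ : ℝ) (hβ : 0 < β) (hs : 0 < s) (hμ : 0 < μ)
    (P : ℕ) (hP : 1 ≤ P) (ν : Fin P → ℝ)
    (istar : Fin P) (histar : ∀ j, ν j ≤ ν istar) :
    ∃ xstar : Fin P → ℝ,
      ((∀ i, 0 ≤ xstar i) ∧ {i | xstar i ≠ 0}.Subsingleton ∧ 0 < ∑ i, xstar i) ∧
      (∀ x : Fin P → ℝ, (∀ i, 0 ≤ x i) → {i | x i ≠ 0}.Subsingleton →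
        0 < ∑ i, x i →
        (-β * Real.log (∑ i, xstar i) + s / (∑ i, xstar i)
            + (μ / 2) * ∑ i, (xstar i - ν i) ^ 2)
          ≤ (-β * Real.log (∑ i, x i) + s / (∑ i, x i)
            + (μ / 2) * ∑ i, (x i - ν i) ^ 2)) ∧
      (∀ j, j ≠ istar → xstar j = 0) ∧
      μ * (xstar istar) ^ 3 - μ * ν istar * (xstar istar) ^ 2
          - β * (xstar istar) - s = 0 ∧
      ∀ b : ℝ, μ * b ^ 3 - μ * ν istar * b ^ 2 - β * b - s = 0 →
        b ≤ xstar istar := by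
  obtain ⟨a, ha0, hmin, hcubic, hroot⟩ := scalar_min β s μ (ν istar) hβ hs hμ
  set xstar : Fin P → ℝ := fun j => if j = istar then a else 0 with hxdef
  have hxistar : xstar istar = a := by simp [hxdef]
  have hxj : ∀ j, j ≠ istar → xstar j = 0 := by
    intro j hj; simp [hxdef, hj]
  have hsumx : ∑ i, xstar i = a := by
    simp [hxdef]
  have hsumsq : ∑ i, (xstar i - ν i) ^ 2
      = (a - ν istar) ^ 2 + ∑ i ∈ univ.erase istar, (ν i) ^ 2 := by
    rw [← Finset.add_sum_erase _ _ (Finset.mem_univ istar), hxistar]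
    congr 1
    refine Finset.sum_congr rfl (fun j hj => ?_)
    rw [hxj j (Finset.ne_of_mem_erase hj)]
    ring
  -- general decomposition for a single-support vector
  have hdecomp : ∀ (x : Fin P → ℝ) (i : Fin P), (∀ j, j ≠ i → x j = 0) →
      (∑ j, x j = x i) ∧
      (∑ j, (x j - ν j) ^ 2 = (x i - ν i) ^ 2 + ∑ j ∈ univ.erase i, (ν j) ^ 2) := by
    intro x i hx
    constructor
    · exact Finset.sum_eq_single i (fun b _ hb => hx b hb)
        (fun h => absurd (Finset.mem_univ i) h)
    · rw [← Finset.add_sum_erase _ _ (Finset.mem_univ i)]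
      congr 1
      refine Finset.sum_congr rfl (fun j hj => ?_)
      rw [hx j (Finset.ne_of_mem_erase hj)]
      ring
  have herase : ∀ i : Fin P,
      (∑ j ∈ univ.erase i, (ν j) ^ 2) = (∑ j, (ν j) ^ 2) - (ν i) ^ 2 := by
    intro i
    rw [← Finset.add_sum_erase _ (fun j => (ν j) ^ 2) (Finset.mem_univ i)]
    ring
  refine ⟨xstar, ⟨?_, ?_, ?_⟩, ?_, hxj, ?_, ?_⟩
  · intro i
    by_cases h : i = istar
    · rw [h, hxistar]; exact ha0.le
    · rw [hxj i h]
  · intro i hi j hj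
    simp only [Set.mem_setOf_eq] at hi hj
    by_contra hne
    rcases ne_or_eq i istar with h | h
    · exact hi (hxj i h)
    · rcases ne_or_eq j istar with h' | h'
      · exact hj (hxj j h')
      · exact hne (h.trans h'.symm)
  · rw [hsumx]; exact ha0
  · intro x hxnn hxsub hxsum
    have hex : ∃ i, x i ≠ 0 := by
      by_contra h
      push_neg at h
      rw [Finset.sum_congr rfl (fun i _ => h i)] at hxsum
      simp at hxsum
    obtain ⟨i, hi⟩ := hex
    have hxz : ∀ j, j ≠ i → x j = 0 := by
      intro j hj
      by_contra hjz
      exact hj (hxsub (Set.mem_setOf_eq ▸ hjz) (Set.mem_setOf_eq ▸ hi))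
    obtain ⟨hsum1, hsum2⟩ := hdecomp x i hxz
    have ht0 : 0 < x i := hsum1 ▸ hxsum
    rw [hsumx, hsumsq, hsum1, hsum2, herase i, herase istar]
    set t := x i with htdef
    have h1 : (-β * Real.log a + s / a + (μ/2) * (a - ν istar)^2)
        ≤ (-β * Real.log t + s / t + (μ/2) * (t - ν istar)^2) := hmin t ht0
    have h2 : (μ/2) * ((t - ν istar)^2 + ((∑ j, (ν j)^2) - (ν istar)^2))
        ≤ (μ/2) * ((t - ν i)^2 + ((∑ j, (ν j)^2) - (ν i)^2)) := by
      have h3 : 0 ≤ μ * (t * (ν istar - ν i)) :=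
        mul_nonneg hμ.le (mul_nonneg ht0.le (sub_nonneg.2 (histar i)))
      nlinarith [h3]
    nlinarith [h1, h2]
  · rw [hxistar]; exact hcubic
  · intro b hb; rw [hxistar]; exact hroot b hb
end

section
/- Let β, s, μ > 0, let 1 < w < P, and let ν ∈ ℝ^P with coordinates sorted in descending order: ν₁ ≥ ν₂ ≥ … ≥ ν_P. Consider minimizing F(x) = −β·log(Σᵢ xᵢ) + s/(Σᵢ xᵢ) + (μ/2)·‖x − ν‖² over the set {x ∈ ℝ^P : xᵢ ≥ 0 for all i, at most w coordinates of x are nonzero, and Σᵢ xᵢ > 0}. Then this problem has a global minimizer x* such that x*ᵢ = 0 for all i > w, and there exists ζ > 0 with x*ᵢ = max(0, νᵢ + ζ) for i = 1, …, w and μζ = β/S + s/S², where S = Σ_{i=1}^{w} max(0, νᵢ + ζ). -/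
set_option maxHeartbeats 1000000


open Finset

/-- A strictly monotone map `Fin m → Fin P` satisfies `k ≤ f k` on values. -/
lemma auxStrictMonoLe {m P : ℕ} (f : Fin m → Fin P) (hf : StrictMono f) :
    ∀ k : Fin m, (k : ℕ) ≤ (f k : ℕ) := by
  suffices H : ∀ n (hn : n < m), n ≤ ((f ⟨n, hn⟩ : Fin P) : ℕ) by
    intro k; exact H k.1 k.2
  intro n
  induction n with
  | zero => intro _; exact Nat.zero_le _
  | succ n ih =>
      intro hn
      have hlt : n < m := Nat.lt_of_succ_lt hn
      have h1 := ih hlt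
      have h2 : f ⟨n, hlt⟩ < f ⟨n + 1, hn⟩ := hf (by simp [Fin.lt_def])
      have h3 : ((f ⟨n, hlt⟩ : Fin P) : ℕ) < ((f ⟨n + 1, hn⟩ : Fin P) : ℕ) := h2
      omega

/-- Convexity-type tangent inequality for `T ↦ -β log T + s / T`. -/
lemma auxTangent (β s : ℝ) (hβ : 0 < β) (hs : 0 < s) {T T' : ℝ}
    (hT : 0 < T) (hT' : 0 < T') :
    -β * Real.log T' + s / T' + (-(β / T') - s / T' ^ 2) * (T - T')
      ≤ -β * Real.log T + s / T := by
  have hlog : Real.log T - Real.log T' ≤ T / T' - 1 := by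
    rw [← Real.log_div hT.ne' hT'.ne']
    exact Real.log_le_sub_one_of_pos (by positivity)
  have h1 : β * (Real.log T - Real.log T') ≤ β * (T / T' - 1) :=
    mul_le_mul_of_nonneg_left hlog hβ.le
  have e1 : β * (T / T' - 1) = β / T' * (T - T') := by field_simp
  have h2 : s / T' - s / T' ^ 2 * (T - T') ≤ s / T := by
    have key : s / T - (s / T' - s / T' ^ 2 * (T - T')) = s * (T - T') ^ 2 / (T * T' ^ 2) := by
      field_simp
      ring
    nlinarith [div_nonneg (mul_nonneg hs.le (sq_nonneg (T - T'))) (by positivity : (0:ℝ) ≤ T * T' ^ 2)]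
  nlinarith [h1, h2, e1]

/-- Lemma 3 of the paper: the x-subproblem with cardinality bound `1 < w < P` and ν
sorted in descending order has a global minimizer supported on the first `w`
coordinates, characterized by a multiplier ζ > 0 via
`x*ᵢ = max(0, νᵢ + ζ)` for `i ≤ w` and `μζ = β/S + s/S²`,
`S = Σ_{i≤w} max(0, νᵢ + ζ)`. -/
theorem stmt5 (β s μ : ℝ) (hβ : 0 < β) (hs : 0 < s) (hμ : 0 < μ)
    (P w : ℕ) (hw1 : 1 < w) (hwP : w < P) (ν : Fin P → ℝ)
    (hsorted : ∀ i j : Fin P, i ≤ j → ν j ≤ ν i) :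
    ∃ xstar : Fin P → ℝ,
      ((∀ i, 0 ≤ xstar i) ∧ Set.ncard {i | xstar i ≠ 0} ≤ w ∧ 0 < ∑ i, xstar i) ∧
      (∀ x : Fin P → ℝ, (∀ i, 0 ≤ x i) → Set.ncard {i | x i ≠ 0} ≤ w →
        0 < ∑ i, x i →
        (-β * Real.log (∑ i, xstar i) + s / (∑ i, xstar i)
            + (μ / 2) * ∑ i, (xstar i - ν i) ^ 2)
          ≤ (-β * Real.log (∑ i, x i) + s / (∑ i, x i)
            + (μ / 2) * ∑ i, (x i - ν i) ^ 2)) ∧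
      (∀ i : Fin P, w ≤ (i : ℕ) → xstar i = 0) ∧
      ∃ ζ : ℝ, 0 < ζ ∧
        (∀ i : Fin P, (i : ℕ) < w → xstar i = max 0 (ν i + ζ)) ∧
        μ * ζ = β / (∑ i ∈ Finset.univ.filter (fun i : Fin P => (i : ℕ) < w),
                      max 0 (ν i + ζ))
              + s / (∑ i ∈ Finset.univ.filter (fun i : Fin P => (i : ℕ) < w),
                      max 0 (ν i + ζ)) ^ 2 := by
  have hPpos : 0 < P := lt_trans (lt_trans Nat.zero_lt_one hw1) hwP
  set e0 : Fin P := ⟨0, hPpos⟩ with he0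
  set tw : Finset (Fin P) := Finset.univ.filter (fun i : Fin P => (i : ℕ) < w) with htw
  -- the function S(z) and h(z)
  set Sf : ℝ → ℝ := fun z => ∑ i ∈ tw, max 0 (ν i + z) with hSf
  have hSfnonneg : ∀ z, 0 ≤ Sf z := fun z =>
    Finset.sum_nonneg fun i _ => le_max_left _ _
  have hSfcont : Continuous Sf := by
    apply continuous_finset_sum
    intro i _
    exact continuous_const.max (continuous_const.add continuous_id)
  set h : ℝ → ℝ := fun z => μ * z * (Sf z) ^ 2 - β * (Sf z) - s with hh
  have hhcont : Continuous h := by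
    apply Continuous.sub
    apply Continuous.sub
    · exact (continuous_const.mul continuous_id).mul (hSfcont.pow 2)
    · exact continuous_const.mul hSfcont
    · exact continuous_const
  have he0mem : e0 ∈ tw := by
    simp [htw, he0]
    omega
  set Z : ℝ := max (1 - ν e0) ((β + s + 1) / μ) with hZ
  have hZ2 : (β + s + 1) / μ ≤ Z := le_max_right _ _
  have hμZ : β + s + 1 ≤ μ * Z := by
    rw [div_le_iff₀ hμ] at hZ2
    linarith [hZ2]
  have hZpos : 0 < Z := by
    have : 0 < (β + s + 1) / μ := by positivity
    linarith [hZ2]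
  have hSZ1 : 1 ≤ Sf Z := by
    have h1 : max 0 (ν e0 + Z) ≤ Sf Z :=
      Finset.single_le_sum (f := fun i => max 0 (ν i + Z))
        (fun i _ => le_max_left 0 (ν i + Z)) he0mem
    have h2 : 1 ≤ ν e0 + Z := by
      have : 1 - ν e0 ≤ Z := le_max_left _ _
      linarith
    have h3 : (1:ℝ) ≤ max 0 (ν e0 + Z) := le_trans h2 (le_max_right _ _)
    linarith
  have hhZ : 0 < h Z := by
    simp only [hh]
    have hSq : Sf Z ≤ (Sf Z) ^ 2 := by nlinarith [hSZ1]
    have h1 : (β + s + 1) * (Sf Z) ^ 2 ≤ μ * Z * (Sf Z) ^ 2 :=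
      mul_le_mul_of_nonneg_right hμZ (sq_nonneg _)
    nlinarith [hSZ1, hSq, h1]
  have hh0 : h 0 < 0 := by
    simp only [hh]
    have := hSfnonneg 0
    nlinarith
  -- IVT
  obtain ⟨ζ, hζmem, hζroot⟩ := intermediate_value_Icc hZpos.le hhcont.continuousOn
    (Set.mem_Icc.mpr ⟨hh0.le, hhZ.le⟩)
  have hζpos : 0 < ζ := by
    rcases lt_or_eq_of_le hζmem.1 with h' | h'
    · exact h'
    · exfalso; rw [← h'] at hζroot; linarith [hh0, hζroot]
  set S : ℝ := Sf ζ with hSdef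
  have hSnn : 0 ≤ S := hSfnonneg ζ
  have hhζ : μ * ζ * S ^ 2 - β * S - s = 0 := hζroot
  have hSpos : 0 < S := by
    rcases lt_or_eq_of_le hSnn with h' | h'
    · exact h'
    · exfalso; rw [← h'] at hhζ; nlinarith
  have hζeq : μ * ζ = β / S + s / S ^ 2 := by
    field_simp
    nlinarith [hhζ]
  -- define xstar
  set xstar : Fin P → ℝ := fun i => if (i : ℕ) < w then max 0 (ν i + ζ) else 0
    with hxstar
  have hxnn : ∀ i, 0 ≤ xstar i := by
    intro i; simp only [hxstar]
    split
    · exact le_max_left _ _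
    · exact le_refl 0
  have hxzero : ∀ i : Fin P, w ≤ (i : ℕ) → xstar i = 0 := by
    intro i hi; simp only [hxstar]; rw [if_neg (by omega)]
  have hxdef : ∀ i : Fin P, (i : ℕ) < w → xstar i = max 0 (ν i + ζ) := by
    intro i hi; simp only [hxstar]; rw [if_pos hi]
  have hsumx : ∑ i, xstar i = S := by
    simp only [hSdef, hSf, hxstar]
    rw [htw, Finset.sum_filter]
  -- cardinality machinery: filter (i < w) as image of Fin w
  have hwle : w ≤ P := hwP.le
  have htwmap : (Finset.univ : Finset (Fin w)).map (Fin.castLEEmb hwle) = tw := by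
    ext j
    simp only [Finset.mem_map, Finset.mem_univ, true_and, htw, Finset.mem_filter]
    constructor
    · rintro ⟨k, rfl⟩; simpa using k.2
    · intro hj; exact ⟨⟨(j : ℕ), hj⟩, by simp [Fin.castLEEmb]⟩
  have htwcard : tw.card = w := by
    rw [← htwmap, Finset.card_map, Finset.card_univ, Fintype.card_fin]
  have hxcard : Set.ncard {i | xstar i ≠ 0} ≤ w := by
    have hsub : {i | xstar i ≠ 0} ⊆ (tw : Set (Fin P)) := by
      intro i hi
      simp only [Set.mem_setOf_eq] at hi
      by_contra hmem
      simp only [Finset.coe_filter, Set.mem_setOf_eq, htw, Finset.mem_coe,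
        Finset.mem_filter, Finset.mem_univ, true_and] at hmem
      exact hi (hxzero i (by omega))
    calc Set.ncard {i | xstar i ≠ 0} ≤ Set.ncard (tw : Set (Fin P)) :=
          Set.ncard_le_ncard hsub (Finset.finite_toSet tw)
      _ = w := by rw [Set.ncard_coe_finset, htwcard]
  have hSsum : 0 < ∑ i, xstar i := by rw [hsumx]; exact hSpos
  -- The key optimality over the convex set supported on first w coordinates
  have key : ∀ y : Fin P → ℝ, (∀ i, 0 ≤ y i) → (∀ i : Fin P, w ≤ (i : ℕ) → y i = 0) →
      0 < ∑ i, y i →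
      (-β * Real.log (∑ i, xstar i) + s / (∑ i, xstar i)
          + (μ / 2) * ∑ i, (xstar i - ν i) ^ 2)
        ≤ (-β * Real.log (∑ i, y i) + s / (∑ i, y i)
          + (μ / 2) * ∑ i, (y i - ν i) ^ 2) := by
    intro y hynn hyzero hysum
    set T : ℝ := ∑ i, y i with hT
    have hT'eq : ∑ i, xstar i = S := hsumx
    rw [hT'eq]
    -- tangent inequality
    have htan := auxTangent β s hβ hs hysum hSpos
    have hslope : -(β / S) - s / S ^ 2 = -(μ * ζ) := by rw [hζeq]; ring
    rw [hslope] at htan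
    -- quadratic inequality
    have hquad : ∑ i, (xstar i - ν i) ^ 2 + 2 * ∑ i, (xstar i - ν i) * (y i - xstar i)
        ≤ ∑ i, (y i - ν i) ^ 2 := by
      have hpt : ∀ i ∈ Finset.univ, (xstar i - ν i) ^ 2 + 2 * ((xstar i - ν i) * (y i - xstar i))
          ≤ (y i - ν i) ^ 2 := by
        intro i _; nlinarith [sq_nonneg (y i - xstar i)]
      calc ∑ i, (xstar i - ν i) ^ 2 + 2 * ∑ i, (xstar i - ν i) * (y i - xstar i)
          = ∑ i, ((xstar i - ν i) ^ 2 + 2 * ((xstar i - ν i) * (y i - xstar i))) := by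
            rw [Finset.sum_add_distrib, Finset.mul_sum]
        _ ≤ ∑ i, (y i - ν i) ^ 2 := Finset.sum_le_sum hpt
    -- complementarity
    have hC : 0 ≤ ∑ i, (xstar i - ν i - ζ) * (y i - xstar i) := by
      apply Finset.sum_nonneg
      intro i _
      by_cases hi : (i : ℕ) < w
      · rw [hxdef i hi]
        rcases le_or_gt 0 (ν i + ζ) with hm | hm
        · rw [max_eq_right hm]; ring_nf; simp
        · rw [max_eq_left hm.le]
          apply mul_nonneg
          · linarith
          · simpa using hynn i
      · rw [hxzero i (by omega), hyzero i (by omega)]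
        simp
    have hid : ∑ i, (xstar i - ν i - ζ) * (y i - xstar i)
        = ∑ i, (xstar i - ν i) * (y i - xstar i) - ζ * (T - S) := by
      have e1 : ∀ i ∈ Finset.univ, (xstar i - ν i - ζ) * (y i - xstar i)
          = (xstar i - ν i) * (y i - xstar i) - ζ * (y i - xstar i) := by
        intro i _; ring
      rw [Finset.sum_congr rfl e1, Finset.sum_sub_distrib, ← Finset.mul_sum,
        Finset.sum_sub_distrib, ← hT, hsumx]
    rw [hid] at hC
    -- combine
    set Q : ℝ := ∑ i, (y i - ν i) ^ 2 with hQ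
    set Q' : ℝ := ∑ i, (xstar i - ν i) ^ 2 with hQ'
    set R : ℝ := ∑ i, (xstar i - ν i) * (y i - xstar i) with hR
    have hμR : μ * (ζ * (T - S)) ≤ μ * R := by
      apply mul_le_mul_of_nonneg_left _ hμ.le
      linarith
    have hq2 : μ / 2 * (Q' + 2 * R) ≤ μ / 2 * Q :=
      mul_le_mul_of_nonneg_left hquad (by positivity)
    nlinarith [htan, hq2, hμR]
  -- main: arbitrary feasible x
  refine ⟨xstar, ⟨hxnn, hxcard, hSsum⟩, ?_, hxzero, ζ, hζpos, hxdef, hζeq⟩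
  intro x hxn hxc hxs
  -- rearrangement: move support of x into the first w coordinates
  set t : Finset (Fin P) := Finset.univ.filter (fun i => x i ≠ 0) with ht
  have htset : {i | x i ≠ 0} = (t : Set (Fin P)) := by
    ext i; simp [ht]
  rw [htset, Set.ncard_coe_finset] at hxc
  set m : ℕ := t.card with hm
  have hmw : m ≤ w := hxc
  have hmP : m ≤ P := le_trans hmw hwle
  set f : Fin m ↪o Fin P := t.orderEmbOfFin rfl with hf
  have hfle : ∀ k : Fin m, (k : ℕ) ≤ ((f k : Fin P) : ℕ) :=
    auxStrictMonoLe f f.strictMono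
  have hfmem : ∀ k : Fin m, f k ∈ t := fun k => t.orderEmbOfFin_mem rfl k
  set x' : Fin P → ℝ := fun j => if hj : (j : ℕ) < m then x (f ⟨(j : ℕ), hj⟩) else 0
    with hx'
  have hximg : (Finset.univ : Finset (Fin m)).map f.toEmbedding = t := by
    ext j
    simp only [Finset.mem_map, Finset.mem_univ, true_and]
    constructor
    · rintro ⟨k, rfl⟩; exact hfmem k
    · intro hj
      have hr := Finset.range_orderEmbOfFin t (rfl : t.card = m)
      have : j ∈ Set.range (t.orderEmbOfFin rfl) := by rw [hr]; exact hj
      obtain ⟨k, hk⟩ := this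
      exact ⟨k, hk⟩
  -- membership of the image of castLE
  have humem : ∀ j : Fin P, (j ∈ (Finset.univ : Finset (Fin m)).map (Fin.castLEEmb hmP))
      ↔ (j : ℕ) < m := by
    intro j
    simp only [Finset.mem_map, Finset.mem_univ, true_and]
    constructor
    · rintro ⟨k, rfl⟩; simpa using k.2
    · intro hj; exact ⟨⟨(j : ℕ), hj⟩, by simp [Fin.castLEEmb]⟩
  -- generic transfer for sums killed at 0
  have hgen : ∀ q : ℝ → ℝ, q 0 = 0 → ∑ j, q (x' j) = ∑ i, q (x i) := by
    intro q hq0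
    have step1 : ∑ j, q (x' j)
        = ∑ j ∈ (Finset.univ : Finset (Fin m)).map (Fin.castLEEmb hmP), q (x' j) := by
      symm
      apply Finset.sum_subset (Finset.subset_univ _)
      intro j _ hj
      rw [humem] at hj
      have : x' j = 0 := by simp only [hx']; rw [dif_neg hj]
      rw [this, hq0]
    have step2 : ∑ j ∈ (Finset.univ : Finset (Fin m)).map (Fin.castLEEmb hmP), q (x' j)
        = ∑ k : Fin m, q (x (f k)) := by
      rw [Finset.sum_map]
      apply Finset.sum_congr rfl
      intro k _
      have hkm : ((Fin.castLEEmb hmP k : Fin P) : ℕ) < m := by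
        simp [Fin.castLEEmb]
      congr 1
      simp only [hx']
      rw [dif_pos hkm]
      congr 1
    have step3 : ∑ k : Fin m, q (x (f k)) = ∑ i ∈ t, q (x i) := by
      rw [← hximg, Finset.sum_map]
      rfl
    have step4 : ∑ i ∈ t, q (x i) = ∑ i, q (x i) := by
      apply Finset.sum_subset (Finset.subset_univ _)
      intro i _ hi
      simp only [ht, Finset.mem_filter, Finset.mem_univ, true_and, not_not] at hi
      rw [hi, hq0]
    rw [step1, step2, step3, step4]
  have hsum_eq : ∑ j, x' j = ∑ i, x i := hgen id rfl
  have hsq_eq : ∑ j, (x' j) ^ 2 = ∑ i, (x i) ^ 2 := by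
    have := hgen (fun t => t ^ 2) (by norm_num)
    simpa using this
  -- the ν-product inequality
  have hprod : ∑ i, x i * ν i ≤ ∑ j, x' j * ν j := by
    have stepA : ∑ j, x' j * ν j = ∑ k : Fin m, x (f k) * ν (Fin.castLE hmP k) := by
      have step1 : ∑ j, x' j * ν j
          = ∑ j ∈ (Finset.univ : Finset (Fin m)).map (Fin.castLEEmb hmP), x' j * ν j := by
        symm
        apply Finset.sum_subset (Finset.subset_univ _)
        intro j _ hj
        rw [humem] at hj
        have : x' j = 0 := by simp only [hx']; rw [dif_neg hj]
        rw [this, zero_mul]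
      rw [step1, Finset.sum_map]
      apply Finset.sum_congr rfl
      intro k _
      have hkm : ((Fin.castLEEmb hmP k : Fin P) : ℕ) < m := by simp [Fin.castLEEmb]
      have hx'k : x' (Fin.castLEEmb hmP k) = x (f k) := by
        simp only [hx']
        rw [dif_pos hkm]
        congr 1
      rw [hx'k]
      rfl
    have stepB : ∑ i, x i * ν i = ∑ k : Fin m, x (f k) * ν (f k) := by
      have step4 : ∑ i, x i * ν i = ∑ i ∈ t, x i * ν i := by
        symm
        apply Finset.sum_subset (Finset.subset_univ _)
        intro i _ hi
        simp only [ht, Finset.mem_filter, Finset.mem_univ, true_and, not_not] at hi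
        rw [hi, zero_mul]
      rw [step4, ← hximg, Finset.sum_map]
      rfl
    rw [stepA, stepB]
    apply Finset.sum_le_sum
    intro k _
    apply mul_le_mul_of_nonneg_left _ (hxn (f k))
    apply hsorted
    rw [Fin.le_def]
    simpa [Fin.castLE] using hfle k
  -- expansion of the quadratic
  have hexp : ∀ z : Fin P → ℝ, ∑ j, (z j - ν j) ^ 2
      = ∑ j, (z j) ^ 2 - 2 * ∑ j, z j * ν j + ∑ j, (ν j) ^ 2 := by
    intro z
    rw [Finset.mul_sum, ← Finset.sum_sub_distrib, ← Finset.sum_add_distrib]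
    apply Finset.sum_congr rfl
    intro j _
    ring
  have hquad' : ∑ j, (x' j - ν j) ^ 2 ≤ ∑ i, (x i - ν i) ^ 2 := by
    rw [hexp x', hexp x, hsq_eq]
    linarith
  -- x' is feasible for `key`
  have hx'nn : ∀ j, 0 ≤ x' j := by
    intro j
    simp only [hx']
    split
    · exact hxn _
    · exact le_refl 0
  have hx'zero : ∀ j : Fin P, w ≤ (j : ℕ) → x' j = 0 := by
    intro j hj
    simp only [hx']
    rw [dif_neg (by omega)]
  have hx'sum : 0 < ∑ j, x' j := by rw [hsum_eq]; exact hxs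
  have hkey := key x' hx'nn hx'zero hx'sum
  -- conclude
  have hfinal : (-β * Real.log (∑ j, x' j) + s / (∑ j, x' j)
      + (μ / 2) * ∑ j, (x' j - ν j) ^ 2)
      ≤ (-β * Real.log (∑ i, x i) + s / (∑ i, x i)
      + (μ / 2) * ∑ i, (x i - ν i) ^ 2) := by
    rw [hsum_eq]
    have : (μ / 2) * ∑ j, (x' j - ν j) ^ 2 ≤ (μ / 2) * ∑ i, (x i - ν i) ^ 2 :=
      mul_le_mul_of_nonneg_left hquad' (by positivity)
    linarith
  linarith [hkey, hfinal]
end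

section
/- Let α, ρ > 0, let c ∈ ℝ^L with cₗ > 0 for all l, and let θ ∈ ℝ^L. For t ∈ [0,1], define C(t) = {y ∈ ℝ^L : 0 ≤ yₗ ≤ t·cₗ for all l}, define φ(t, y) = α·t + (ρ/2)·‖y − θ‖², define y(t) coordinatewise by y(t)ₗ = min(t·cₗ, max(0, θₗ)), and define Φ(t) = φ(t, y(t)). If t* minimizes Φ over [0,1], then the pair (t*, y(t*)) minimizes φ over the set {(t, y) : t ∈ [0,1], y ∈ C(t)}, i.e., for every t' ∈ [0,1] and every y' ∈ C(t'), φ(t', y') ≥ φ(t*, y(t*)). -/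
open Finset

/-- Lemma 4 of the paper (main claim): if `t*` minimizes `Φ(t) = φ(t, y(t))` over
`[0,1]`, where `y(t)ₗ = min(t cₗ, max(0, θₗ))`, then `(t*, y(t*))` minimizes
`φ(t, y) = α t + (ρ/2)‖y − θ‖²` over `{(t, y) : t ∈ [0,1], 0 ≤ y ≤ t c}`. -/
theorem stmt7 (L : ℕ) (α ρ : ℝ) (hα : 0 < α) (hρ : 0 < ρ)
    (c : Fin L → ℝ) (hc : ∀ l, 0 < c l) (θ : Fin L → ℝ)
    (tstar : ℝ) (htstar : tstar ∈ Set.Icc (0 : ℝ) 1)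
    (hmin : ∀ t ∈ Set.Icc (0 : ℝ) 1,
      (α * tstar + (ρ / 2) * ∑ l, (min (tstar * c l) (max 0 (θ l)) - θ l) ^ 2)
        ≤ (α * t + (ρ / 2) * ∑ l, (min (t * c l) (max 0 (θ l)) - θ l) ^ 2)) :
    ∀ t' ∈ Set.Icc (0 : ℝ) 1, ∀ y' : Fin L → ℝ,
      (∀ l, 0 ≤ y' l ∧ y' l ≤ t' * c l) →
      (α * tstar + (ρ / 2) * ∑ l, (min (tstar * c l) (max 0 (θ l)) - θ l) ^ 2)
        ≤ (α * t' + (ρ / 2) * ∑ l, (y' l - θ l) ^ 2) := by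
  intro t' ht' y' hy'
  refine le_trans (hmin t' ht') ?_
  have hsum : (∑ l, (min (t' * c l) (max 0 (θ l)) - θ l) ^ 2)
      ≤ ∑ l, (y' l - θ l) ^ 2 := by
    apply Finset.sum_le_sum
    intro l _
    obtain ⟨h0, h1⟩ := hy' l
    rcases le_total (θ l) 0 with h | h
    · have : max 0 (θ l) = 0 := max_eq_left h
      rw [this]
      have htc : 0 ≤ t' * c l := le_trans h0 h1
      rw [min_eq_right htc]
      nlinarith
    · rw [max_eq_right h]
      rcases le_total (t' * c l) (θ l) with h2 | h2
      · rw [min_eq_left h2]; nlinarith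
      · rw [min_eq_right h2]; nlinarith
  nlinarith
end

section
/- Let R be an L×P real matrix with nonnegative entries such that no column of R is identically zero. Let ρ, α, β > 0, let c ∈ ℝ^L with cₗ > 0 for all l, partition the coordinates {1,…,P} into K nonempty blocks, and let sₖ > 0 for each block k. Define f(x) = Σₖ ( −β·log(Σ_{i in block k} xᵢ) + sₖ/(Σ_{i in block k} xᵢ) ) and g(y) = α·maxₗ (yₗ/cₗ). Then for every M > 0, the function (x, y, z) ↦ f(x) + g(y) + (ρ/2)·‖y − Rx + z/ρ‖² − ‖z‖²/(2ρ) is bounded below on the set {x ∈ ℝ^P : x ≥ 0 and every block sum of x is positive} × {y ∈ ℝ^L : 0 ≤ y ≤ c} × {z ∈ ℝ^L : ‖z‖ ≤ M}. In particular, for any sequences with xʲ in that feasible set, 0 ≤ yʲ ≤ c, and ‖zʲ‖ ≤ M, the sequence of augmented Lagrangian values L_ρ(xʲ, yʲ; zʲ) = f(xʲ) + g(yʲ) + ⟨zʲ, yʲ − Rxʲ⟩ + (ρ/2)‖yʲ − Rxʲ‖² is bounded below. -/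
open Finset

set_option maxHeartbeats 2000000 in
/-- Proposition 1 of the paper: lower boundedness of the augmented Lagrangian.
With `f(x) = Σₖ (−β log(block-sum) + sₖ/(block-sum))` and `g(y) = α maxₗ yₗ/cₗ`,
the function `f(x) + g(y) + (ρ/2)‖y − Rx + z/ρ‖² − ‖z‖²/(2ρ)` is bounded below on
feasible `x`, box-constrained `y`, and norm-bounded `z`; in particular the
augmented Lagrangian values along such sequences are bounded below. -/
theorem stmt10 (L P K : ℕ) (hL : 0 < L)
    (R : Matrix (Fin L) (Fin P) ℝ)
    (hRpos : ∀ l i, 0 ≤ R l i) (hRcol : ∀ i, ∃ l, R l i ≠ 0)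
    (ρ α β : ℝ) (hρ : 0 < ρ) (hα : 0 < α) (hβ : 0 < β)
    (c : Fin L → ℝ) (hc : ∀ l, 0 < c l)
    (blk : Fin P → Fin K) (hblk : Function.Surjective blk)
    (s : Fin K → ℝ) (hs : ∀ k, 0 < s k)
    (f : (Fin P → ℝ) → ℝ)
    (hf : ∀ x, f x = ∑ k,
      (-β * Real.log (∑ i ∈ Finset.univ.filter (fun i => blk i = k), x i)
        + s k / (∑ i ∈ Finset.univ.filter (fun i => blk i = k), x i)))
    (g : (Fin L → ℝ) → ℝ)
    (hg : ∀ y, g y = α * ⨆ l : Fin L, y l / c l) :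
    (∀ M : ℝ, 0 < M →
      ∃ B : ℝ, ∀ (x : Fin P → ℝ) (y z : Fin L → ℝ),
        (∀ i, 0 ≤ x i) →
        (∀ k, 0 < ∑ i ∈ Finset.univ.filter (fun i => blk i = k), x i) →
        (∀ l, 0 ≤ y l ∧ y l ≤ c l) →
        Real.sqrt (∑ l, z l ^ 2) ≤ M →
        B ≤ f x + g y + (ρ / 2) * (∑ l, (y l - R.mulVec x l + z l / ρ) ^ 2)
            - (∑ l, z l ^ 2) / (2 * ρ)) ∧
    (∀ (X : ℕ → Fin P → ℝ) (Y Z : ℕ → Fin L → ℝ) (M : ℝ),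
      (∀ j i, 0 ≤ X j i) →
      (∀ j k, 0 < ∑ i ∈ Finset.univ.filter (fun i => blk i = k), X j i) →
      (∀ j l, 0 ≤ Y j l ∧ Y j l ≤ c l) →
      (∀ j, Real.sqrt (∑ l, Z j l ^ 2) ≤ M) →
      ∃ B : ℝ, ∀ j, B ≤ f (X j) + g (Y j)
        + (∑ l, Z j l * (Y j l - R.mulVec (X j) l))
        + (ρ / 2) * (∑ l, (Y j l - R.mulVec (X j) l) ^ 2)) := by
  have hL' : (0:ℝ) < (L:ℝ) := by exact_mod_cast hL
  -- column sums are positive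
  have hcolpos : ∀ i, 0 < ∑ l, R l i := by
    intro i
    obtain ⟨l, hl⟩ := hRcol i
    exact Finset.sum_pos' (fun l' _ => hRpos l' i)
      ⟨l, Finset.mem_univ l, lt_of_le_of_ne (hRpos l i) (Ne.symm hl)⟩
  -- a uniform positive lower bound for the column sums
  obtain ⟨ε, hεpos, hεle⟩ : ∃ ε : ℝ, 0 < ε ∧ ∀ i, ε ≤ ∑ l, R l i := by
    rcases isEmpty_or_nonempty (Fin P) with hP | hP
    · exact ⟨1, one_pos, fun i => (hP.false i).elim⟩
    · obtain ⟨i0, _, hi0⟩ := Finset.exists_min_image Finset.univ (fun i => ∑ l, R l i)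
        ⟨Classical.arbitrary _, Finset.mem_univ _⟩
      exact ⟨_, hcolpos i0, fun i => hi0 i (Finset.mem_univ i)⟩
  -- the key bound (part 1)
  have key : ∀ M : ℝ, 0 < M →
      ∃ B : ℝ, ∀ (x : Fin P → ℝ) (y z : Fin L → ℝ),
        (∀ i, 0 ≤ x i) →
        (∀ k, 0 < ∑ i ∈ Finset.univ.filter (fun i => blk i = k), x i) →
        (∀ l, 0 ≤ y l ∧ y l ≤ c l) →
        Real.sqrt (∑ l, z l ^ 2) ≤ M →
        B ≤ f x + g y + (ρ / 2) * (∑ l, (y l - R.mulVec x l + z l / ρ) ^ 2)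
            - (∑ l, z l ^ 2) / (2 * ρ) := by
    intro M hM
    obtain ⟨Cy, hCy, hCyle⟩ : ∃ Cy : ℝ, 0 ≤ Cy ∧ (∑ l, c l) ≤ Cy :=
      ⟨∑ l, c l, Finset.sum_nonneg fun l _ => (hc l).le, le_refl _⟩
    obtain ⟨C0, hC0def⟩ : ∃ v : ℝ, v = Cy + L * M / ρ := ⟨_, rfl⟩
    have hC0 : 0 ≤ C0 := by rw [hC0def]; positivity
    obtain ⟨b', hb'def⟩ : ∃ v : ℝ, v = β * K / ε := ⟨_, rfl⟩
    have hb' : 0 ≤ b' := by rw [hb'def]; positivity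
    obtain ⟨d, hddef⟩ : ∃ v : ℝ, v = ρ / (2 * L) := ⟨_, rfl⟩
    have hd : 0 < d := by rw [hddef]; positivity
    refine ⟨-b' * C0 - M ^ 2 / (2 * ρ) - b' ^ 2 / (4 * d), ?_⟩
    intro x y z hx hσ hy hz
    obtain ⟨t, htdef⟩ : ∃ v : ℝ, v = ∑ i, x i := ⟨_, rfl⟩
    have ht : 0 ≤ t := htdef ▸ Finset.sum_nonneg fun i _ => hx i
    obtain ⟨S, hSdef⟩ : ∃ v : ℝ, v = ∑ l, R.mulVec x l := ⟨_, rfl⟩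
    obtain ⟨Q, hQdef⟩ : ∃ v : ℝ, v = ∑ l, (y l - R.mulVec x l + z l / ρ) ^ 2 := ⟨_, rfl⟩
    obtain ⟨Sv, hSvdef⟩ : ∃ v : ℝ, v = ∑ l, (y l - R.mulVec x l + z l / ρ) := ⟨_, rfl⟩
    obtain ⟨Zs, hZsdef⟩ : ∃ v : ℝ, v = ∑ l, z l ^ 2 := ⟨_, rfl⟩
    rw [← hQdef, ← hZsdef]
    have hSε : ε * t ≤ S := by
      have hS' : S = ∑ i, (∑ l, R l i) * x i := by
        rw [hSdef]
        simp only [Matrix.mulVec, dotProduct]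
        rw [Finset.sum_comm]
        exact Finset.sum_congr rfl fun i _ => (Finset.sum_mul _ _ _).symm
      rw [hS', htdef, Finset.mul_sum]
      exact Finset.sum_le_sum fun i _ =>
        mul_le_mul_of_nonneg_right (hεle i) (hx i)
    -- bound on z
    have hz2nonneg : (0:ℝ) ≤ Zs := hZsdef ▸ Finset.sum_nonneg fun l _ => sq_nonneg _
    have hzM2 : Zs ≤ M ^ 2 := by
      rw [hZsdef]
      have h0 : (0:ℝ) ≤ ∑ l, z l ^ 2 := Finset.sum_nonneg fun l _ => sq_nonneg _
      calc ∑ l, z l ^ 2 = Real.sqrt (∑ l, z l ^ 2) ^ 2 := (Real.sq_sqrt h0).symm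
        _ ≤ M ^ 2 := pow_le_pow_left₀ (Real.sqrt_nonneg _) hz 2
    have hzl : ∀ l, z l ≤ M := by
      intro l
      have h1 : z l ^ 2 ≤ ∑ l', z l' ^ 2 :=
        Finset.single_le_sum (fun l' _ => sq_nonneg (z l')) (Finset.mem_univ l)
      nlinarith [hM]
    -- lower bound on f
    have hfx : -(β * (K : ℝ) * t) ≤ f x := by
      rw [hf]
      have hstep : ∀ k : Fin K, -(β * t) ≤
          -β * Real.log (∑ i ∈ Finset.univ.filter (fun i => blk i = k), x i)
            + s k / (∑ i ∈ Finset.univ.filter (fun i => blk i = k), x i) := by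
        intro k
        have hσk := hσ k
        have hσt : (∑ i ∈ Finset.univ.filter (fun i => blk i = k), x i) ≤ t := by
          rw [htdef]
          exact Finset.sum_le_sum_of_subset_of_nonneg (Finset.filter_subset _ _)
            (fun i _ _ => hx i)
        have hlog : Real.log (∑ i ∈ Finset.univ.filter (fun i => blk i = k), x i) ≤ t := by
          have := Real.log_le_sub_one_of_pos hσk
          linarith
        have hdivpos : 0 < s k / (∑ i ∈ Finset.univ.filter (fun i => blk i = k), x i) :=
          div_pos (hs k) hσk
        nlinarith [hβ]
      calc -(β * (K : ℝ) * t) = ∑ _k : Fin K, -(β * t) := by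
            rw [Finset.sum_const, Finset.card_univ, Fintype.card_fin, nsmul_eq_mul]; ring
        _ ≤ _ := Finset.sum_le_sum fun k _ => hstep k
    -- g is nonneg
    have hg0 : 0 ≤ g y := by
      rw [hg y]
      have hne : Nonempty (Fin L) := ⟨⟨0, hL⟩⟩
      refine mul_nonneg hα.le ?_
      refine le_trans (div_nonneg (hy ⟨0, hL⟩).1 (hc ⟨0, hL⟩).le) ?_
      exact le_ciSup (f := fun l : Fin L => y l / c l)
        (Set.Finite.bddAbove (Set.finite_range _)) (⟨0, hL⟩ : Fin L)
    -- quadratic term bounds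
    have hQ0 : (0:ℝ) ≤ Q := hQdef ▸ Finset.sum_nonneg fun l _ => sq_nonneg _
    have hsumv : Sv ≤ C0 - S := by
      have hexp : Sv = (∑ l, y l) - S + (∑ l, z l) / ρ := by
        rw [hSvdef, hSdef, Finset.sum_div, ← Finset.sum_sub_distrib, ← Finset.sum_add_distrib]
      have h1 : ∑ l, y l ≤ Cy := le_trans (Finset.sum_le_sum fun l _ => (hy l).2) hCyle
      have h2 : ∑ l, z l ≤ (L : ℝ) * M := by
        calc ∑ l, z l ≤ ∑ _l : Fin L, M := Finset.sum_le_sum fun l _ => hzl l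
          _ = (L : ℝ) * M := by
            rw [Finset.sum_const, Finset.card_univ, Fintype.card_fin, nsmul_eq_mul]
      have h3 : (∑ l, z l) / ρ ≤ (L : ℝ) * M / ρ := by gcongr
      rw [hexp, hC0def]; linarith
    have hQsum : Sv ^ 2 ≤ (L : ℝ) * Q := by
      rw [hSvdef, hQdef]
      have := sq_sum_le_card_mul_sum_sq
        (s := (Finset.univ : Finset (Fin L))) (f := fun l => y l - R.mulVec x l + z l / ρ)
      simpa [Finset.card_univ] using this
    have hzterm : Zs / (2 * ρ) ≤ M ^ 2 / (2 * ρ) := by gcongr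
    by_cases hcase : S ≤ C0
    · -- small case
      have htC : β * (K : ℝ) * t ≤ b' * C0 := by
        have ht2 : t ≤ C0 / ε := by
          rw [le_div_iff₀ hεpos]; linarith [hSε, mul_comm t ε]
        have h := mul_le_mul_of_nonneg_left ht2 (show (0:ℝ) ≤ β * K by positivity)
        have heq : β * (K : ℝ) * (C0 / ε) = b' * C0 := by
          rw [hb'def]; field_simp
        linarith
      have hb2 : 0 ≤ b' ^ 2 / (4 * d) := by positivity
      have hQ' : 0 ≤ (ρ / 2) * Q := mul_nonneg (by positivity) hQ0
      linarith [hfx, hg0]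
    · push_neg at hcase
      obtain ⟨w, hwdef⟩ : ∃ v : ℝ, v = S - C0 := ⟨_, rfl⟩
      have hw : 0 < w := by rw [hwdef]; linarith
      have hsv : Sv ≤ -w := by
        rw [hwdef]; linarith [hsumv]
      have hQw : w ^ 2 ≤ (L : ℝ) * Q := by
        have h3 : w ≤ -Sv := by linarith
        have h2 : w ^ 2 ≤ Sv ^ 2 := by
          calc w ^ 2 = w * w := sq w
            _ ≤ (-Sv) * (-Sv) := mul_self_le_mul_self hw.le h3
            _ = Sv ^ 2 := by ring
        linarith [hQsum]
      have hQd : d * w ^ 2 ≤ (ρ / 2) * Q := by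
        have h1 : w ^ 2 / (L : ℝ) ≤ Q := by
          rw [div_le_iff₀ hL']; linarith [hQw, mul_comm (L : ℝ) Q]
        have h2 := mul_le_mul_of_nonneg_left h1 (show (0:ℝ) ≤ ρ / 2 by positivity)
        have heq : d * w ^ 2 = (ρ / 2) * (w ^ 2 / (L : ℝ)) := by
          rw [hddef]; field_simp
        linarith
      have htw : β * (K : ℝ) * t ≤ b' * w + b' * C0 := by
        have ht2 : t ≤ (w + C0) / ε := by
          rw [le_div_iff₀ hεpos, hwdef]; linarith [hSε, mul_comm t ε]
        have h := mul_le_mul_of_nonneg_left ht2 (show (0:ℝ) ≤ β * K by positivity)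
        have heq : β * (K : ℝ) * ((w + C0) / ε) = b' * w + b' * C0 := by
          rw [hb'def]; field_simp
        linarith
      have hdw : -(b' ^ 2 / (4 * d)) ≤ d * w ^ 2 - b' * w := by
        have hkey : (d * w ^ 2 - b' * w) - (-(b' ^ 2 / (4 * d)))
            = (2 * d * w - b') ^ 2 / (4 * d) := by
          field_simp; ring
        have hpos : 0 ≤ (2 * d * w - b') ^ 2 / (4 * d) := by positivity
        linarith
      linarith [hfx, hg0]
  refine ⟨key, ?_⟩
  -- part 2
  intro X Y Z M hX hXσ hY hZ
  have hM0 : 0 ≤ M := le_trans (Real.sqrt_nonneg _) (hZ 0)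
  obtain ⟨B, hB⟩ := key (M + 1) (by linarith)
  refine ⟨B, fun j => ?_⟩
  have hZM : Real.sqrt (∑ l, Z j l ^ 2) ≤ M + 1 := le_trans (hZ j) (by linarith)
  have hident : (∑ l, Z j l * (Y j l - R.mulVec (X j) l))
      + (ρ / 2) * (∑ l, (Y j l - R.mulVec (X j) l) ^ 2)
      = (ρ / 2) * (∑ l, (Y j l - R.mulVec (X j) l + Z j l / ρ) ^ 2)
        - (∑ l, Z j l ^ 2) / (2 * ρ) := by
    have hgen : ∀ a b : ℝ, b * a + (ρ / 2) * a ^ 2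
        = (ρ / 2) * (a + b / ρ) ^ 2 - b ^ 2 / (2 * ρ) := by
      intro a b
      field_simp
      ring
    have hterm : ∀ l, Z j l * (Y j l - R.mulVec (X j) l)
        + (ρ / 2) * (Y j l - R.mulVec (X j) l) ^ 2
        = (ρ / 2) * (Y j l - R.mulVec (X j) l + Z j l / ρ) ^ 2 - Z j l ^ 2 / (2 * ρ) :=
      fun l => hgen (Y j l - R.mulVec (X j) l) (Z j l)
    have hsum := Finset.sum_congr rfl fun l (_ : l ∈ (Finset.univ : Finset (Fin L))) => hterm l
    rw [Finset.sum_add_distrib, Finset.sum_sub_distrib, ← Finset.mul_sum, ← Finset.mul_sum,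
      ← Finset.sum_div] at hsum
    linarith
  have := hB (X j) (Y j) (Z j) (hX j) (hXσ j) (hY j) hZM
  linarith
end

section
/- Let R be an L×P real matrix with operator norm ‖R‖, let ρ > 0 and μ > 0, let y, w ∈ ℝ^L, and define h(x) = (ρ/2)·‖y − Rx + w‖². Let X ⊆ ℝ^P be any set, let f : ℝ^P → ℝ, let x₀ ∈ X, and suppose x⁺ ∈ X minimizes the function x ↦ f(x) + ⟨∇h(x₀), x − x₀⟩ + (μ/2)·‖x − x₀‖² over X. Then f(x₀) + h(x₀) − f(x⁺) − h(x⁺) ≥ ((μ − ρ·‖R‖²)/2)·‖x⁺ − x₀‖². -/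
open scoped RealInnerProductSpace
open InnerProductSpace

set_option maxHeartbeats 1000000 in

/-- Sufficient-decrease estimate (34) for the linearized proximal x-update:
if `x⁺` minimizes `x ↦ f(x) + ⟨∇h(x₀), x − x₀⟩ + (μ/2)‖x − x₀‖²` over `X`, where
`h(x) = (ρ/2)‖y − Rx + w‖²`, then
`f(x₀) + h(x₀) − f(x⁺) − h(x⁺) ≥ ((μ − ρ‖R‖²)/2)‖x⁺ − x₀‖²`. -/
theorem stmt12 (L P : ℕ) (ρ μ : ℝ) (hρ : 0 < ρ) (hμ : 0 < μ)
    (R : EuclideanSpace ℝ (Fin P) →L[ℝ] EuclideanSpace ℝ (Fin L))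
    (y w : EuclideanSpace ℝ (Fin L))
    (h : EuclideanSpace ℝ (Fin P) → ℝ)
    (hh : ∀ x, h x = (ρ / 2) * ‖y - R x + w‖ ^ 2)
    (X : Set (EuclideanSpace ℝ (Fin P))) (f : EuclideanSpace ℝ (Fin P) → ℝ)
    (x₀ : EuclideanSpace ℝ (Fin P)) (hx₀ : x₀ ∈ X)
    (xp : EuclideanSpace ℝ (Fin P)) (hxp : xp ∈ X)
    (hmin : ∀ x ∈ X,
      f xp + ⟪gradient h x₀, xp - x₀⟫ + (μ / 2) * ‖xp - x₀‖ ^ 2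
        ≤ f x + ⟪gradient h x₀, x - x₀⟫ + (μ / 2) * ‖x - x₀‖ ^ 2) :
    f x₀ + h x₀ - f xp - h xp ≥ ((μ - ρ * ‖R‖ ^ 2) / 2) * ‖xp - x₀‖ ^ 2 := by
  set v : EuclideanSpace ℝ (Fin L) := y - R x₀ + w with hv
  set d : EuclideanSpace ℝ (Fin P) := xp - x₀ with hd
  -- compute the gradient
  have hu : HasFDerivAt (fun x => y - R x + w) (-R) x₀ := by
    have : HasFDerivAt (fun x : EuclideanSpace ℝ (Fin P) => y - R x + w)
        ((0 : EuclideanSpace ℝ (Fin P) →L[ℝ] EuclideanSpace ℝ (Fin L)) - R + 0) x₀ :=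
      ((hasFDerivAt_const y x₀).sub R.hasFDerivAt).add (hasFDerivAt_const w x₀)
    simpa using this
  have hgrad : HasGradientAt h ((-ρ) • (ContinuousLinearMap.adjoint R v)) x₀ := by
    rw [hasGradientAt_iff_hasFDerivAt]
    have h2 : HasFDerivAt (fun x => (ρ/2) * ⟪(y - R x + w), (y - R x + w)⟫)
        ((ρ/2) • ((fderivInnerCLM ℝ (v, v)).comp ((-R).prod (-R)))) x₀ :=
      (hu.inner ℝ hu).const_mul (ρ/2)
    have heq : (fun x => (ρ/2) * ⟪(y - R x + w), (y - R x + w)⟫) = h := by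
      funext x; rw [hh x, real_inner_self_eq_norm_sq]
    rw [heq] at h2
    refine h2.congr_fderiv ?_
    ext z
    simp [toDual_apply_apply, ContinuousLinearMap.adjoint_inner_left, real_inner_smul_left,
      real_inner_comm]
    have hs : ∀ (n : ℕ) (a b : Fin n → ℝ), ∑ i, a i * b i = ∑ i, b i * a i := by
      intro n a b; exact Finset.sum_congr rfl fun i _ => mul_comm _ _
    ring
  have hg : gradient h x₀ = (-ρ) • (ContinuousLinearMap.adjoint R v) := hgrad.gradient
  have hgd : ⟪gradient h x₀, d⟫ = -ρ * ⟪v, R d⟫ := by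
    rw [hg, real_inner_smul_left, ContinuousLinearMap.adjoint_inner_left]
  -- expansion of h xp
  have hRd : y - R xp + w = v - R d := by
    simp only [hv, hd, map_sub]
    abel
  have hhxp : h xp = (ρ/2) * (‖v‖^2 - 2 * ⟪v, R d⟫ + ‖R d‖^2) := by
    rw [hh xp, hRd, norm_sub_sq_real]
  have hhx0 : h x₀ = (ρ/2) * ‖v‖^2 := hh x₀
  -- minimality at x₀
  have hm := hmin x₀ hx₀
  simp only [sub_self, inner_zero_right, norm_zero] at hm
  -- operator norm bound
  have hop : ‖R d‖^2 ≤ ‖R‖^2 * ‖d‖^2 := by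
    have := R.le_opNorm d
    nlinarith [norm_nonneg (R d), norm_nonneg d, norm_nonneg R]
  nlinarith [hm, hgd, hhxp, hhx0, hop, sq_nonneg ‖d‖]
end

section
/- Let R be an L×P real matrix with operator norm ‖R‖, let ρ > 0 and μ > 0, let X ⊆ ℝ^P be any set, let Y ⊆ ℝ^L be a convex set, let f : ℝ^P → ℝ be any function, and let g : ℝ^L → ℝ be a convex function. Define L_ρ(x, y; z) = f(x) + g(y) + ⟨z, y − Rx⟩ + (ρ/2)·‖y − Rx‖². Suppose xʲ ∈ X, yʲ ∈ Y, zʲ ∈ ℝ^L, and: (i) x^{j+1} minimizes x ↦ f(x) + ⟨∇h(xʲ), x − xʲ⟩ + (μ/2)·‖x − xʲ‖² over X, where h(x) = (ρ/2)·‖yʲ − Rx + zʲ/ρ‖²; (ii) y^{j+1} minimizes y ↦ g(y) + (ρ/2)·‖y − Rx^{j+1} + zʲ/ρ‖² over Y; (iii) z^{j+1} = zʲ + ρ·(y^{j+1} − Rx^{j+1}). Then L_ρ(xʲ, yʲ; zʲ) − L_ρ(x^{j+1}, y^{j+1}; z^{j+1}) + (1/ρ)·‖z^{j+1} − zʲ‖²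 ≥ ((μ − ρ·‖R‖²)/2)·‖x^{j+1} − xʲ‖² + (ρ/2)·‖y^{j+1} − yʲ‖². -/
open scoped RealInnerProductSpace


private lemma grad_quad {n m : ℕ} (ρ : ℝ)
    (R : EuclideanSpace ℝ (Fin n) →L[ℝ] EuclideanSpace ℝ (Fin m))
    (w : EuclideanSpace ℝ (Fin m)) (x d : EuclideanSpace ℝ (Fin n)) :
    ⟪gradient (fun x => (ρ/2) * ‖w - R x‖^2) x, d⟫ = -(ρ * ⟪w - R x, R d⟫) := by
  have hu : HasFDerivAt (fun t => w - R t) (0 - R) x :=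
    (hasFDerivAt_const w x).sub R.hasFDerivAt
  have hq := (hu.inner ℝ hu).const_mul (ρ/2)
  have hq' : HasFDerivAt (fun t => (ρ/2) * ‖w - R t‖^2)
      ((ρ/2) • ((fderivInnerCLM ℝ (w - R x, w - R x)).comp ((0-R).prod (0-R)))) x := by
    simpa only [real_inner_self_eq_norm_sq] using hq
  have hg := (hasFDerivAt_iff_hasGradientAt.mp hq')
  rw [hg.gradient, InnerProductSpace.toDual_symm_apply]
  simp only [ContinuousLinearMap.coe_smul', Pi.smul_apply, ContinuousLinearMap.coe_comp',
    Function.comp_apply, ContinuousLinearMap.prod_apply, ContinuousLinearMap.coe_sub',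
    Pi.sub_apply, ContinuousLinearMap.zero_apply, zero_sub, fderivInnerCLM_apply,
    ContinuousLinearMap.neg_apply, inner_neg_right, inner_neg_left, smul_eq_mul]
  rw [real_inner_comm (R d)]
  ring

private lemma expand_aux {m : ℕ} {ρ : ℝ} (hρ : 0 < ρ) (a z : EuclideanSpace ℝ (Fin m)) :
    (ρ/2)*‖a + ρ⁻¹ • z‖^2 = ⟪z, a⟫ + (ρ/2)*‖a‖^2 + (ρ⁻¹/2)*‖z‖^2 := by
  have hρ' : ρ ≠ 0 := hρ.ne'
  rw [norm_add_sq_real, real_inner_smul_right, norm_smul, Real.norm_eq_abs,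
    abs_of_pos (inv_pos.mpr hρ), real_inner_comm a z, mul_pow]
  field_simp
  ring

private lemma quad_combo {m : ℕ} (t : ℝ) (p q : EuclideanSpace ℝ (Fin m)) :
    ‖(1-t)•p + t•q‖^2 = (1-t)*‖p‖^2 + t*‖q‖^2 - t*(1-t)*‖q - p‖^2 := by
  simp only [← real_inner_self_eq_norm_sq, inner_add_left, inner_add_right,
    inner_sub_left, inner_sub_right, real_inner_smul_left, real_inner_smul_right]
  rw [real_inner_comm q p]
  ring

set_option maxHeartbeats 1000000

/-- Lemma 5 of the paper: sufficient-decrease inequality for one iteration of the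
proximal-linearized nonconvex ADMM with augmented Lagrangian
`L_ρ(x, y; z) = f(x) + g(y) + ⟨z, y − Rx⟩ + (ρ/2)‖y − Rx‖²`. -/
theorem stmt15 (L P : ℕ) (ρ μ : ℝ) (hρ : 0 < ρ) (hμ : 0 < μ)
    (R : EuclideanSpace ℝ (Fin P) →L[ℝ] EuclideanSpace ℝ (Fin L))
    (X : Set (EuclideanSpace ℝ (Fin P))) (Y : Set (EuclideanSpace ℝ (Fin L)))
    (hY : Convex ℝ Y)
    (f : EuclideanSpace ℝ (Fin P) → ℝ) (g : EuclideanSpace ℝ (Fin L) → ℝ)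
    (hg : ConvexOn ℝ Set.univ g)
    (xj xj1 : EuclideanSpace ℝ (Fin P)) (yj yj1 zj zj1 : EuclideanSpace ℝ (Fin L))
    (hxj : xj ∈ X) (hyj : yj ∈ Y) (hxj1 : xj1 ∈ X) (hyj1 : yj1 ∈ Y)
    (h : EuclideanSpace ℝ (Fin P) → ℝ)
    (hh : ∀ x, h x = (ρ / 2) * ‖yj - R x + ρ⁻¹ • zj‖ ^ 2)
    (hxmin : ∀ x ∈ X,
      f xj1 + ⟪gradient h xj, xj1 - xj⟫ + (μ / 2) * ‖xj1 - xj‖ ^ 2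
        ≤ f x + ⟪gradient h xj, x - xj⟫ + (μ / 2) * ‖x - xj‖ ^ 2)
    (hymin : ∀ y ∈ Y,
      g yj1 + (ρ / 2) * ‖yj1 - R xj1 + ρ⁻¹ • zj‖ ^ 2
        ≤ g y + (ρ / 2) * ‖y - R xj1 + ρ⁻¹ • zj‖ ^ 2)
    (hz : zj1 = zj + ρ • (yj1 - R xj1)) :
    (f xj + g yj + ⟪zj, yj - R xj⟫ + (ρ / 2) * ‖yj - R xj‖ ^ 2)
      - (f xj1 + g yj1 + ⟪zj1, yj1 - R xj1⟫ + (ρ / 2) * ‖yj1 - R xj1‖ ^ 2)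
      + (1 / ρ) * ‖zj1 - zj‖ ^ 2
    ≥ ((μ - ρ * ‖R‖ ^ 2) / 2) * ‖xj1 - xj‖ ^ 2 + (ρ / 2) * ‖yj1 - yj‖ ^ 2 := by
  have hρ0 : ρ ≠ 0 := hρ.ne'
  set w : EuclideanSpace ℝ (Fin L) := yj + ρ⁻¹ • zj with hw
  have hfun : h = fun x => (ρ/2) * ‖w - R x‖^2 := by
    funext x
    rw [hh]
    congr 2
    rw [hw]; abel
  -- gradient inner product value
  have hgrad : ⟪gradient h xj, xj1 - xj⟫ = -(ρ * ⟪w - R xj, R (xj1 - xj)⟫) := by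
    rw [hfun]; exact grad_quad ρ R w xj (xj1 - xj)
  -- conversion identity
  have hcv : ∀ x, h x = ⟪zj, yj - R x⟫ + (ρ/2)*‖yj - R x‖^2 + (ρ⁻¹/2)*‖zj‖^2 := by
    intro x
    rw [hh x, expand_aux hρ (yj - R x) zj]
  have hcvY : ∀ y : EuclideanSpace ℝ (Fin L),
      (ρ/2)*‖y - R xj1 + ρ⁻¹ • zj‖^2
        = ⟪zj, y - R xj1⟫ + (ρ/2)*‖y - R xj1‖^2 + (ρ⁻¹/2)*‖zj‖^2 := fun y =>
    expand_aux hρ (y - R xj1) zj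
  -- Step A : x-update decrease
  have ha : f xj1 + ⟪gradient h xj, xj1 - xj⟫ + (μ/2)*‖xj1 - xj‖^2 ≤ f xj := by
    have := hxmin xj hxj
    simpa using this
  have hb : h xj1 = h xj - ρ*⟪w - R xj, R (xj1 - xj)⟫ + (ρ/2)*‖R (xj1 - xj)‖^2 := by
    have e : w - R xj1 = (w - R xj) - R (xj1 - xj) := by
      rw [map_sub]; abel
    simp only [hfun]
    rw [e, norm_sub_sq_real]
    ring
  have hc2 : ‖R (xj1 - xj)‖^2 ≤ ‖R‖^2 * ‖xj1 - xj‖^2 := by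
    calc ‖R (xj1 - xj)‖^2 ≤ (‖R‖ * ‖xj1 - xj‖)^2 :=
          pow_le_pow_left₀ (norm_nonneg _) (R.le_opNorm _) 2
      _ = ‖R‖^2 * ‖xj1 - xj‖^2 := by ring
  have hmul : (ρ/2)*‖R (xj1 - xj)‖^2 ≤ (ρ/2)*(‖R‖^2 * ‖xj1 - xj‖^2) :=
    mul_le_mul_of_nonneg_left hc2 (by positivity)
  have hA : (f xj + ⟪zj, yj - R xj⟫ + (ρ/2)*‖yj - R xj‖^2)
      - (f xj1 + ⟪zj, yj - R xj1⟫ + (ρ/2)*‖yj - R xj1‖^2)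
      ≥ ((μ - ρ * ‖R‖^2)/2) * ‖xj1 - xj‖^2 := by
    have e1 := hcv xj
    have e2 := hcv xj1
    rw [hgrad] at ha
    linarith
  -- Step B : y-update decrease (strong convexity)
  have hstrong : (g yj1 + (ρ/2)*‖yj1 - R xj1 + ρ⁻¹ • zj‖^2) + (ρ/2)*‖yj - yj1‖^2
      ≤ g yj + (ρ/2)*‖yj - R xj1 + ρ⁻¹ • zj‖^2 := by
    apply le_of_forall_pos_le_add
    intro ε hε
    set D : ℝ := ρ * ‖yj - yj1‖^2 + 1 with hD
    have hDpos : 0 < D := by positivity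
    set t : ℝ := min (1/2) (ε / D) with htdef
    have ht0 : 0 < t := lt_min (by norm_num) (div_pos hε hDpos)
    have ht1 : t < 1 := lt_of_le_of_lt (min_le_left _ _) (by norm_num)
    have htD : t * D ≤ ε := by
      have h1 : t ≤ ε / D := min_le_right _ _
      calc t * D ≤ (ε/D) * D := by nlinarith
        _ = ε := div_mul_cancel₀ ε hDpos.ne'
    set yt : EuclideanSpace ℝ (Fin L) := yj1 + t • (yj - yj1) with hyt
    have hmem : yt ∈ Y := by
      have := hY hyj1 hyj (by linarith : (0:ℝ) ≤ 1 - t) ht0.le (by ring)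
      rw [hyt]
      convert this using 1
      module
    have hkey := hymin yt hmem
    have hcombo : ‖yt - R xj1 + ρ⁻¹ • zj‖^2
        = (1-t)*‖yj1 - R xj1 + ρ⁻¹ • zj‖^2 + t*‖yj - R xj1 + ρ⁻¹ • zj‖^2
          - t*(1-t)*‖yj - yj1‖^2 := by
      have e1 : yt - R xj1 + ρ⁻¹ • zj
          = (1-t)•(yj1 - R xj1 + ρ⁻¹ • zj) + t•(yj - R xj1 + ρ⁻¹ • zj) := by
        rw [hyt]; module
      have e2 : (yj - R xj1 + ρ⁻¹ • zj) - (yj1 - R xj1 + ρ⁻¹ • zj) = yj - yj1 := by abel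
      rw [e1, quad_combo, e2]
    have hgc : g yt ≤ (1-t)*g yj1 + t*g yj := by
      have e : yt = (1-t)•yj1 + t•yj := by rw [hyt]; module
      rw [e]
      exact hg.2 (Set.mem_univ _) (Set.mem_univ _) (by linarith) ht0.le (by ring)
    rw [hcombo] at hkey
    have hdiv : (g yj1 + (ρ/2)*‖yj1 - R xj1 + ρ⁻¹ • zj‖^2 + (ρ/2)*(1-t)*‖yj - yj1‖^2) * t
        ≤ (g yj + (ρ/2)*‖yj - R xj1 + ρ⁻¹ • zj‖^2) * t := by linarith [hkey, hgc]
    have hmain := le_of_mul_le_mul_right hdiv ht0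
    have hts : 0 ≤ t * ‖yj - yj1‖^2 := mul_nonneg ht0.le (sq_nonneg _)
    have hsmall : (ρ/2)*t*‖yj - yj1‖^2 ≤ ε := by nlinarith [htD, hts, hρ.le, ht0.le]
    linarith
  have hB : (g yj + ⟪zj, yj - R xj1⟫ + (ρ/2)*‖yj - R xj1‖^2)
      - (g yj1 + ⟪zj, yj1 - R xj1⟫ + (ρ/2)*‖yj1 - R xj1‖^2)
      ≥ (ρ/2) * ‖yj1 - yj‖^2 := by
    have e1 := hcvY yj
    have e2 := hcvY yj1
    have e3 : ‖yj - yj1‖ = ‖yj1 - yj‖ := norm_sub_rev _ _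
    rw [e1, e2, e3] at hstrong
    linarith
  -- Step C : dual update
  have hyz : yj1 - R xj1 = ρ⁻¹ • (zj1 - zj) := by
    rw [hz, add_sub_cancel_left, smul_smul, inv_mul_cancel₀ hρ0, one_smul]
  have hC : ⟪zj, yj1 - R xj1⟫ - ⟪zj1, yj1 - R xj1⟫ + (1/ρ) * ‖zj1 - zj‖^2 = 0 := by
    rw [hyz, real_inner_smul_right, real_inner_smul_right]
    have : ⟪zj, zj1 - zj⟫ - ⟪zj1, zj1 - zj⟫ = -‖zj1 - zj‖^2 := by
      rw [← inner_sub_left, ← real_inner_self_eq_norm_sq, ← inner_neg_left]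
      congr 1
      abel
    rw [one_div]
    linear_combination ρ⁻¹ * this
  linarith [hA, hB, hC]
end

section
/- Let R be an L×P real matrix with operator norm ‖R‖, let ρ > 0 and μ > ρ·‖R‖², let X ⊆ ℝ^P, let Y ⊆ ℝ^L be convex, let f : ℝ^P → ℝ, and let g : ℝ^L → ℝ be convex. Let (xʲ, yʲ, zʲ)_{j≥1} be sequences with xʲ ∈ X, yʲ ∈ Y such that for every j: (i) x^{j+1} minimizes x ↦ f(x) + ⟨∇h_j(xʲ), x − xʲ⟩ + (μ/2)‖x − xʲ‖² over X with h_j(x) = (ρ/2)‖yʲ − Rx + zʲ/ρ‖²; (ii) y^{j+1} minimizes y ↦ g(y) + (ρ/2)‖y − Rx^{j+1} + zʲ/ρ‖² over Y; (iii) z^{j+1} = zʲ + ρ(y^{j+1} − Rx^{j+1}). Assume further that the sequence L_ρ(xʲ, yʹ; zʲ) = f(xʲ) + g(yʲ) + ⟨zʲ, yʲ − Rxʲ⟩ + (ρ/2)‖yʲ − Rxʲ‖² is bounded below and that Σ_j ‖z^{j+1} − zʲ‖² < ∞. Then Σ_j ‖x^{j+1} − xʲ‖² < ∞ and Σ_j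 ‖y^{j+1} − yʲ‖² < ∞; in particular x^{j+1} − xʲ → 0, y^{j+1} − yʲ → 0, and yʲ − Rxʲ → 0 as j → ∞. -/
open Filter
open scoped RealInnerProductSpace

section Aux

variable {E F : Type*} [NormedAddCommGroup E] [InnerProductSpace ℝ E]
  [NormedAddCommGroup F] [InnerProductSpace ℝ F]

lemma quad_expand [CompleteSpace E] [CompleteSpace F] (ρ : ℝ) (R : E →L[ℝ] F) (w : F) (x₀ v : E) :
    (ρ/2) * ‖w - R (x₀ + v)‖^2
      = (ρ/2) * ‖w - R x₀‖^2
        + ⟪ρ • ((ContinuousLinearMap.adjoint R) (R x₀ - w)), v⟫ + (ρ/2) * ‖R v‖^2 := by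
  have h1 : w - R (x₀ + v) = (w - R x₀) - R v := by rw [map_add]; abel
  rw [h1, norm_sub_sq_real, real_inner_smul_left, ContinuousLinearMap.adjoint_inner_left,
    inner_sub_left, inner_sub_left]
  ring

lemma quad_hasGradient [CompleteSpace E] [CompleteSpace F] (ρ : ℝ) (R : E →L[ℝ] F) (w : F) (x₀ : E) :
    HasGradientAt (fun x' => (ρ/2) * ‖w - R x'‖^2)
      (ρ • ((ContinuousLinearMap.adjoint R) (R x₀ - w))) x₀ := by
  rw [hasGradientAt_iff_isLittleO_nhds_zero]
  have heq : ∀ v : E, (ρ/2)*‖w - R (x₀+v)‖^2 - (ρ/2)*‖w - R x₀‖^2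
      - ⟪ρ • ((ContinuousLinearMap.adjoint R) (R x₀ - w)), v⟫ = (ρ/2)*‖R v‖^2 := by
    intro v; rw [quad_expand]; ring
  simp only [heq]
  rw [Asymptotics.isLittleO_iff]
  intro c hc
  have hK : (0:ℝ) ≤ |ρ|/2 * ‖R‖^2 := by positivity
  have hδ : (0:ℝ) < c / (|ρ|/2 * ‖R‖^2 + 1) := by positivity
  rw [Metric.eventually_nhds_iff]
  refine ⟨c / (|ρ|/2 * ‖R‖^2 + 1), hδ, fun {v} hv => ?_⟩
  have hv' : ‖v‖ < c / (|ρ|/2 * ‖R‖^2 + 1) := by simpa using hv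
  have h2 : ‖R v‖ ≤ ‖R‖ * ‖v‖ := R.le_opNorm v
  have h3 : ‖R v‖ * ‖R v‖ ≤ (‖R‖*‖v‖) * (‖R‖*‖v‖) :=
    mul_le_mul h2 h2 (norm_nonneg _) (by positivity)
  have h4 : ‖(ρ/2)*‖R v‖^2‖ = |ρ|/2 * ‖R v‖^2 := by
    rw [Real.norm_eq_abs, abs_mul, abs_div]
    simp [abs_of_nonneg (sq_nonneg (‖R v‖))]
  rw [h4]
  have h5 : |ρ|/2*‖R v‖^2 ≤ (|ρ|/2*‖R‖^2) * ‖v‖ * ‖v‖ := by nlinarith [abs_nonneg ρ]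
  have h6 : (|ρ|/2*‖R‖^2) * ‖v‖ ≤ c := by
    have := hv'.le
    rw [le_div_iff₀ (by positivity)] at this
    nlinarith [norm_nonneg v]
  calc |ρ|/2*‖R v‖^2 ≤ (|ρ|/2*‖R‖^2) * ‖v‖ * ‖v‖ := h5
    _ ≤ c * ‖v‖ := by nlinarith [norm_nonneg v]

lemma sq_convex_identity (a y₁ y₂ : F) (t : ℝ) :
    ‖(y₁ + t • (y₂ - y₁)) - a‖^2
      = (1-t)*‖y₁-a‖^2 + t*‖y₂-a‖^2 - t*(1-t)*‖y₂-y₁‖^2 := by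
  set u := y₁ - a with hu
  set v := y₂ - a with hv
  have hvu : y₂ - y₁ = v - u := by rw [hu, hv]; abel
  have h1 : (y₁ + t • (y₂ - y₁)) - a = u + t • (v - u) := by rw [hvu, hu]; abel
  rw [h1, hvu, norm_add_sq_real]
  have e3 : ⟪u, t • (v - u)⟫ = t*(⟪v,u⟫ - ‖u‖^2) := by
    rw [real_inner_smul_right, inner_sub_right, real_inner_self_eq_norm_sq, real_inner_comm]
  have e4 : ‖t • (v - u)‖^2 = t^2*‖v-u‖^2 := by
    rw [norm_smul, mul_pow, Real.norm_eq_abs, sq_abs]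
  rw [e3, e4, norm_sub_sq_real v u]
  ring

lemma aug_expand (ρ : ℝ) (hρ : ρ ≠ 0) (z u : F) :
    (ρ/2)*‖u + ρ⁻¹ • z‖^2 = ⟪z, u⟫ + (ρ/2)*‖u‖^2 + (ρ*2)⁻¹ * ‖z‖^2 := by
  rw [norm_add_sq_real, real_inner_smul_right, real_inner_comm, norm_smul, mul_pow,
    Real.norm_eq_abs, sq_abs]
  field_simp
  ring

lemma strong_min {Ys : Set F} (hYs : Convex ℝ Ys) {g : F → ℝ} (hg : ConvexOn ℝ Set.univ g)
    (ρ : ℝ) (hρ : 0 < ρ) (a y₀ : F) (hy₀ : y₀ ∈ Ys)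
    (hmin : ∀ y' ∈ Ys, g y₀ + (ρ/2)*‖y₀ - a‖^2 ≤ g y' + (ρ/2)*‖y' - a‖^2)
    {y' : F} (hy' : y' ∈ Ys) :
    g y₀ + (ρ/2)*‖y₀ - a‖^2 + (ρ/2)*‖y' - y₀‖^2 ≤ g y' + (ρ/2)*‖y' - a‖^2 := by
  have key : ∀ t ∈ Set.Ioo (0:ℝ) 1,
      g y₀ + (ρ/2)*‖y₀ - a‖^2 + (ρ/2)*(1-t)*‖y' - y₀‖^2 ≤ g y' + (ρ/2)*‖y' - a‖^2 := by
    intro t ht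
    obtain ⟨ht0, ht1⟩ := ht
    have hmem : y₀ + t • (y' - y₀) ∈ Ys := by
      have h1 := hYs hy₀ hy' (by linarith : (0:ℝ) ≤ 1 - t) ht0.le (by ring)
      have h2 : (1-t) • y₀ + t • y' = y₀ + t • (y' - y₀) := by
        rw [sub_smul, one_smul, smul_sub]; abel
      rwa [h2] at h1
    have hgt : g (y₀ + t • (y' - y₀)) ≤ (1-t)*(g y₀) + t*(g y') := by
      have h1 := hg.2 (Set.mem_univ y₀) (Set.mem_univ y')
        (by linarith : (0:ℝ) ≤ 1 - t) ht0.le (by ring)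
      have h2 : (1-t) • y₀ + t • y' = y₀ + t • (y' - y₀) := by
        rw [sub_smul, one_smul, smul_sub]; abel
      rw [h2] at h1
      simpa using h1
    have hq := sq_convex_identity a y₀ y' t
    have h1 := hmin _ hmem
    nlinarith [ht0, ht1, hρ]
  have hne : ((nhdsWithin (0:ℝ) (Set.Ioo (0:ℝ) 1)).NeBot) := by
    have h0 : (0:ℝ) ∈ closure (Set.Ioo (0:ℝ) 1) := by
      rw [closure_Ioo (by norm_num : (0:ℝ) ≠ 1)]
      exact ⟨le_refl 0, by norm_num⟩
    exact mem_closure_iff_nhdsWithin_neBot.mp h0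
  have hlim : Tendsto (fun t : ℝ => g y₀ + (ρ/2)*‖y₀ - a‖^2 + (ρ/2)*(1-t)*‖y' - y₀‖^2)
      (nhdsWithin (0:ℝ) (Set.Ioo (0:ℝ) 1))
      (nhds (g y₀ + (ρ/2)*‖y₀ - a‖^2 + (ρ/2)*‖y' - y₀‖^2)) := by
    apply Tendsto.mono_left _ nhdsWithin_le_nhds
    have hcont : Continuous fun t : ℝ =>
        g y₀ + (ρ/2)*‖y₀ - a‖^2 + (ρ/2)*(1-t)*‖y' - y₀‖^2 := by continuity
    have := hcont.tendsto 0
    simpa using this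
  exact le_of_tendsto hlim (eventually_nhdsWithin_of_forall key)

lemma tendsto_zero_of_norm_sq {u : ℕ → E} (h : Tendsto (fun j => ‖u j‖^2) atTop (nhds 0)) :
    Tendsto u atTop (nhds 0) := by
  rw [tendsto_zero_iff_norm_tendsto_zero]
  have h1 := (Real.continuous_sqrt.tendsto 0).comp h
  have h2 : (fun j => Real.sqrt (‖u j‖^2)) = fun j => ‖u j‖ :=
    funext fun j => Real.sqrt_sq (norm_nonneg _)
  rw [show Real.sqrt 0 = 0 from Real.sqrt_zero] at h1
  rwa [← h2]

end Aux

set_option maxHeartbeats 1000000 in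
/-- Quantitative conclusions in the proof of Theorem 1 of the paper: for the
proximal-linearized nonconvex ADMM iterates, if the augmented Lagrangian values are
bounded below and the multiplier differences are square-summable, then the successive
primal differences are square-summable (hence vanish) and `yʲ − Rxʲ → 0`. -/
theorem stmt17 (L P : ℕ) (ρ μ : ℝ) (hρ : 0 < ρ)
    (R : EuclideanSpace ℝ (Fin P) →L[ℝ] EuclideanSpace ℝ (Fin L))
    (hμ : ρ * ‖R‖ ^ 2 < μ)
    (Xs : Set (EuclideanSpace ℝ (Fin P))) (Ys : Set (EuclideanSpace ℝ (Fin L)))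
    (hYs : Convex ℝ Ys)
    (f : EuclideanSpace ℝ (Fin P) → ℝ) (g : EuclideanSpace ℝ (Fin L) → ℝ)
    (hg : ConvexOn ℝ Set.univ g)
    (x : ℕ → EuclideanSpace ℝ (Fin P)) (y z : ℕ → EuclideanSpace ℝ (Fin L))
    (hx : ∀ j, x j ∈ Xs) (hy : ∀ j, y j ∈ Ys)
    (h : ℕ → EuclideanSpace ℝ (Fin P) → ℝ)
    (hh : ∀ j x', h j x' = (ρ / 2) * ‖y j - R x' + ρ⁻¹ • z j‖ ^ 2)
    (hxmin : ∀ j, ∀ x' ∈ Xs,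
      f (x (j + 1)) + ⟪gradient (h j) (x j), x (j + 1) - x j⟫
          + (μ / 2) * ‖x (j + 1) - x j‖ ^ 2
        ≤ f x' + ⟪gradient (h j) (x j), x' - x j⟫ + (μ / 2) * ‖x' - x j‖ ^ 2)
    (hymin : ∀ j, ∀ y' ∈ Ys,
      g (y (j + 1)) + (ρ / 2) * ‖y (j + 1) - R (x (j + 1)) + ρ⁻¹ • z j‖ ^ 2
        ≤ g y' + (ρ / 2) * ‖y' - R (x (j + 1)) + ρ⁻¹ • z j‖ ^ 2)
    (hz : ∀ j, z (j + 1) = z j + ρ • (y (j + 1) - R (x (j + 1))))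
    (hbdd : ∃ B : ℝ, ∀ j, B ≤
      f (x j) + g (y j) + ⟪z j, y j - R (x j)⟫ + (ρ / 2) * ‖y j - R (x j)‖ ^ 2)
    (hsz : Summable (fun j => ‖z (j + 1) - z j‖ ^ 2)) :
    Summable (fun j => ‖x (j + 1) - x j‖ ^ 2) ∧
    Summable (fun j => ‖y (j + 1) - y j‖ ^ 2) ∧
    Tendsto (fun j => x (j + 1) - x j) atTop (nhds 0) ∧
    Tendsto (fun j => y (j + 1) - y j) atTop (nhds 0) ∧
    Tendsto (fun j => y j - R (x j)) atTop (nhds 0) := by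
  have hρ' : ρ ≠ 0 := ne_of_gt hρ
  set c : ℝ := (μ - ρ * ‖R‖ ^ 2) / 2 with hc
  have hcpos : 0 < c := by rw [hc]; linarith
  obtain ⟨B, hB⟩ := hbdd
  set Lg : ℕ → ℝ := fun j =>
    f (x j) + g (y j) + ⟪z j, y j - R (x j)⟫ + (ρ / 2) * ‖y j - R (x j)‖ ^ 2 with hLg
  have hB' : ∀ j, B ≤ Lg j := hB
  -- key descent inequality
  have key : ∀ j, Lg (j+1) + (c * ‖x (j+1) - x j‖ ^ 2 + (ρ/2) * ‖y (j+1) - y j‖ ^ 2)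
      ≤ Lg j + ρ⁻¹ * ‖z (j+1) - z j‖ ^ 2 := by
    intro j
    set w : EuclideanSpace ℝ (Fin L) := y j + ρ⁻¹ • z j with hw
    have hfun : h j = fun x' => (ρ/2) * ‖w - R x'‖ ^ 2 := by
      funext x'
      rw [hh]
      have : y j - R x' + ρ⁻¹ • z j = w - R x' := by rw [hw]; abel
      rw [this]
    set G : EuclideanSpace ℝ (Fin P) :=
      ρ • ((ContinuousLinearMap.adjoint R) (R (x j) - w)) with hG
    have hgrad : gradient (h j) (x j) = G := by
      rw [hfun]
      exact (quad_hasGradient ρ R w (x j)).gradient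
    -- Step A : x-update descent
    have hA : f (x (j+1)) + ⟪G, x (j+1) - x j⟫ + (μ/2) * ‖x (j+1) - x j‖ ^ 2 ≤ f (x j) := by
      have h1 := hxmin j (x j) (hx j)
      rw [hgrad] at h1
      simpa using h1
    have hhval : h j (x (j+1)) = h j (x j) + ⟪G, x (j+1) - x j⟫
        + (ρ/2) * ‖R (x (j+1) - x j)‖ ^ 2 := by
      have h1 := quad_expand ρ R w (x j) (x (j+1) - x j)
      rw [add_sub_cancel] at h1
      rw [hfun]
      exact h1
    have hRle : ‖R (x (j+1) - x j)‖ ≤ ‖R‖ * ‖x (j+1) - x j‖ := R.le_opNorm _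
    have hstepA : f (x (j+1)) + h j (x (j+1)) + c * ‖x (j+1) - x j‖ ^ 2
        ≤ f (x j) + h j (x j) := by
      have hsq : ‖R (x (j+1) - x j)‖ ^ 2 ≤ ‖R‖ ^ 2 * ‖x (j+1) - x j‖ ^ 2 := by
        nlinarith [norm_nonneg (R (x (j+1) - x j)), norm_nonneg (x (j+1) - x j),
          norm_nonneg R]
      rw [hc]
      nlinarith [hρ]
    -- Step B : y-update descent with strong convexity
    set a : EuclideanSpace ℝ (Fin L) := R (x (j+1)) - ρ⁻¹ • z j with ha
    have hrew : ∀ y' : EuclideanSpace ℝ (Fin L),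
        y' - R (x (j+1)) + ρ⁻¹ • z j = y' - a := by
      intro y'; rw [ha]; abel
    have hmin' : ∀ y' ∈ Ys, g (y (j+1)) + (ρ/2) * ‖y (j+1) - a‖ ^ 2
        ≤ g y' + (ρ/2) * ‖y' - a‖ ^ 2 := by
      intro y' hy'
      have h1 := hymin j y' hy'
      rw [hrew, hrew] at h1
      exact h1
    have hB2 := strong_min hYs hg ρ hρ a (y (j+1)) (hy (j+1)) hmin' (hy j)
    -- conversions to augmented Lagrangian form
    have hconv : ∀ x', h j x' = ⟪z j, y j - R x'⟫ + (ρ/2) * ‖y j - R x'‖ ^ 2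
        + (ρ*2)⁻¹ * ‖z j‖ ^ 2 := by
      intro x'; rw [hh]
      exact aug_expand ρ hρ' (z j) (y j - R x')
    have hconv2 : ∀ y' : EuclideanSpace ℝ (Fin L),
        (ρ/2) * ‖y' - a‖ ^ 2 = ⟪z j, y' - R (x (j+1))⟫
          + (ρ/2) * ‖y' - R (x (j+1))‖ ^ 2 + (ρ*2)⁻¹ * ‖z j‖ ^ 2 := by
      intro y'
      rw [← hrew y']
      exact aug_expand ρ hρ' (z j) (y' - R (x (j+1)))
    -- z-update
    have hΔz : z (j+1) - z j = ρ • (y (j+1) - R (x (j+1))) := by rw [hz]; abel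
    have hv : y (j+1) - R (x (j+1)) = ρ⁻¹ • (z (j+1) - z j) := by
      rw [hΔz, smul_smul, inv_mul_cancel₀ hρ', one_smul]
    have hzkey : ⟪z (j+1), y (j+1) - R (x (j+1))⟫
        = ⟪z j, y (j+1) - R (x (j+1))⟫ + ρ⁻¹ * ‖z (j+1) - z j‖ ^ 2 := by
      have h2 : ⟪z (j+1) - z j, y (j+1) - R (x (j+1))⟫ = ρ⁻¹ * ‖z (j+1) - z j‖ ^ 2 := by
        rw [hv, real_inner_smul_right, real_inner_self_eq_norm_sq]
      have h3 : ⟪z j, y (j+1) - R (x (j+1))⟫ + ⟪z (j+1) - z j, y (j+1) - R (x (j+1))⟫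
          = ⟪z (j+1), y (j+1) - R (x (j+1))⟫ := by
        rw [← inner_add_left]
        congr 1
        abel
      linarith
    have hA2 := hstepA
    rw [hconv (x (j+1)), hconv (x j)] at hA2
    have hB3 := hB2
    rw [hconv2 (y (j+1)), hconv2 (y j)] at hB3
    have hns : ‖y j - y (j+1)‖ = ‖y (j+1) - y j‖ := norm_sub_rev _ _
    rw [hns] at hB3
    simp only [hLg]
    linarith [hA2, hB3, hzkey]
  -- summation
  have hkey2 : ∀ n, Lg n + ∑ j ∈ Finset.range n,
      (c * ‖x (j+1) - x j‖ ^ 2 + (ρ/2) * ‖y (j+1) - y j‖ ^ 2)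
      ≤ Lg 0 + ∑ j ∈ Finset.range n, ρ⁻¹ * ‖z (j+1) - z j‖ ^ 2 := by
    intro n
    induction n with
    | zero => simp
    | succ n ih =>
      rw [Finset.sum_range_succ, Finset.sum_range_succ]
      have := key n
      linarith
  have hsz' : Summable (fun j => ρ⁻¹ * ‖z (j+1) - z j‖ ^ 2) := hsz.mul_left ρ⁻¹
  have hsum : ∀ n, ∑ j ∈ Finset.range n,
      (c * ‖x (j+1) - x j‖ ^ 2 + (ρ/2) * ‖y (j+1) - y j‖ ^ 2)
      ≤ Lg 0 - B + ∑' j, ρ⁻¹ * ‖z (j+1) - z j‖ ^ 2 := by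
    intro n
    have h1 := hkey2 n
    have h2 : ∑ j ∈ Finset.range n, ρ⁻¹ * ‖z (j+1) - z j‖ ^ 2
        ≤ ∑' j, ρ⁻¹ * ‖z (j+1) - z j‖ ^ 2 :=
      Summable.sum_le_tsum (Finset.range n) (fun i _ => by positivity) hsz'
    have h3 : B ≤ Lg n := hB' n
    clear_value Lg c
    linarith
  have hD : Summable (fun j => c * ‖x (j+1) - x j‖ ^ 2 + (ρ/2) * ‖y (j+1) - y j‖ ^ 2) :=
    summable_of_sum_range_le (fun j => by positivity) hsum
  have hx2 : Summable (fun j => ‖x (j+1) - x j‖ ^ 2) := by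
    have h1 : Summable (fun j => c * ‖x (j+1) - x j‖ ^ 2) :=
      hD.of_nonneg_of_le (fun j => by positivity)
        (fun j => by nlinarith [sq_nonneg ‖y (j+1) - y j‖, hρ])
    have h2 := h1.mul_left c⁻¹
    have h3 : (fun j => c⁻¹ * (c * ‖x (j+1) - x j‖ ^ 2)) = fun j => ‖x (j+1) - x j‖ ^ 2 := by
      funext j
      rw [← mul_assoc, inv_mul_cancel₀ (ne_of_gt hcpos), one_mul]
    rwa [h3] at h2
  have hy2 : Summable (fun j => ‖y (j+1) - y j‖ ^ 2) := by
    have h1 : Summable (fun j => (ρ/2) * ‖y (j+1) - y j‖ ^ 2) :=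
      hD.of_nonneg_of_le (fun j => by positivity)
        (fun j => by nlinarith [sq_nonneg ‖x (j+1) - x j‖, hcpos])
    have h2 := h1.mul_left (ρ/2)⁻¹
    have h3 : (fun j => (ρ/2)⁻¹ * ((ρ/2) * ‖y (j+1) - y j‖ ^ 2)) = fun j => ‖y (j+1) - y j‖ ^ 2 := by
      funext j
      rw [← mul_assoc, inv_mul_cancel₀ (by positivity : (ρ/2) ≠ 0), one_mul]
    rwa [h3] at h2
  refine ⟨hx2, hy2, ?_, ?_, ?_⟩
  · exact tendsto_zero_of_norm_sq hx2.tendsto_atTop_zero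
  · exact tendsto_zero_of_norm_sq hy2.tendsto_atTop_zero
  · have hz0 : Tendsto (fun j => z (j+1) - z j) atTop (nhds 0) :=
      tendsto_zero_of_norm_sq hsz.tendsto_atTop_zero
    have h5 : Tendsto (fun j => ρ⁻¹ • (z (j+1) - z j)) atTop (nhds 0) := by
      apply tendsto_zero_of_norm_sq
      have h4 : (fun j => ‖ρ⁻¹ • (z (j+1) - z j)‖ ^ 2)
          = fun j => (ρ⁻¹)^2 * ‖z (j+1) - z j‖ ^ 2 := by
        funext j; rw [norm_smul, mul_pow, Real.norm_eq_abs, sq_abs]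
      rw [h4]
      have h9 : Tendsto (fun j => ‖z (j+1) - z j‖ ^ 2) atTop (nhds 0) :=
        hsz.tendsto_atTop_zero
      have h8 : Tendsto (fun j => (ρ⁻¹)^2 * ‖z (j+1) - z j‖ ^ 2) atTop
          (nhds ((ρ⁻¹)^2 * 0)) := h9.const_mul _
      rwa [mul_zero] at h8
    have h6 : (fun j => y (j+1) - R (x (j+1))) = fun j => ρ⁻¹ • (z (j+1) - z j) := by
      funext j
      have hΔz : z (j+1) - z j = ρ • (y (j+1) - R (x (j+1))) := by rw [hz]; abel
      rw [hΔz, smul_smul, inv_mul_cancel₀ hρ', one_smul]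
    have h7 : Tendsto (fun j => y (j+1) - R (x (j+1))) atTop (nhds 0) := by
      rw [h6]; exact h5
    exact (tendsto_add_atTop_iff_nat 1).mp h7
end

section
/- Let β, s, μ > 0, let P ≥ 1, let ν ∈ ℝ^P, and suppose x* minimizes F(x) = −β·log(Σᵢ xᵢ) + s/(Σᵢ xᵢ) + (μ/2)·‖x − ν‖² over {x ∈ ℝ^P : x ≥ 0, Σᵢ xᵢ > 0}. If ζ > 0 is such that μζ = β/T + s/T² with T = Σᵢ x*ᵢ, then there is no index i with νᵢ + ζ > 0 and x*ᵢ = 0; that is, every coordinate with νᵢ + ζ > 0 is strictly positive at the optimum. -/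
open Finset

/-- Key intermediate claim in the proof of Lemma 1 of the paper: at a minimizer of
the x-subproblem, if ζ > 0 satisfies the stationarity relation
`μζ = β/T + s/T²` with `T = Σᵢ x*ᵢ`, then every coordinate with `νᵢ + ζ > 0`
is strictly positive at the optimum. -/
theorem stmt18 (β s μ : ℝ) (hβ : 0 < β) (hs : 0 < s) (hμ : 0 < μ)
    (P : ℕ) (hP : 1 ≤ P) (ν : Fin P → ℝ) (xstar : Fin P → ℝ)
    (hpos : ∀ i, 0 ≤ xstar i) (hsum : 0 < ∑ i, xstar i)
    (hmin : ∀ x : Fin P → ℝ, (∀ i, 0 ≤ x i) → 0 < ∑ i, x i →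
      (-β * Real.log (∑ i, xstar i) + s / (∑ i, xstar i)
          + (μ / 2) * ∑ i, (xstar i - ν i) ^ 2)
        ≤ (-β * Real.log (∑ i, x i) + s / (∑ i, x i)
          + (μ / 2) * ∑ i, (x i - ν i) ^ 2))
    (ζ : ℝ) (hζ : 0 < ζ)
    (heq : μ * ζ = β / (∑ i, xstar i) + s / (∑ i, xstar i) ^ 2) :
    ∀ i, 0 < ν i + ζ → 0 < xstar i := by
  intro i hνζ
  by_contra hle
  push_neg at hle
  have hxi : xstar i = 0 := le_antisymm hle (hpos i)
  set T : ℝ := ∑ j, xstar j with hT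
  have hT0 : (0:ℝ) < T := hsum
  have hTne : T ≠ 0 := ne_of_gt hT0
  set f : ℝ → ℝ := fun τ => -β * Real.log (T + τ) + s / (T + τ) + (μ / 2) * (τ - ν i) ^ 2
    with hf
  -- derivative of f at 0
  have h1 : HasDerivAt (fun τ : ℝ => T + τ) 1 0 := (hasDerivAt_id 0).const_add T
  have hTτ : T + (0:ℝ) ≠ 0 := by simpa using hTne
  have hlog : HasDerivAt (fun τ : ℝ => Real.log (T + τ)) (1 / (T + 0)) 0 := h1.log hTτ
  have hinv : HasDerivAt (fun τ : ℝ => (T + τ)⁻¹) (-1 / (T + 0) ^ 2) 0 := h1.inv hTτ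
  have hsq : HasDerivAt (fun τ : ℝ => (τ - ν i) ^ 2)
      ((2:ℕ) * ((0:ℝ) - ν i) ^ (2 - 1) * 1) 0 :=
    ((hasDerivAt_id 0).sub_const (ν i)).pow 2
  have hd : HasDerivAt f
      (-β * (1 / (T + 0)) + s * (-1 / (T + 0) ^ 2) + (μ / 2) * ((2:ℕ) * ((0:ℝ) - ν i) ^ (2 - 1) * 1)) 0 := by
    have hfe : f = fun τ => -β * Real.log (T + τ) + s * (T + τ)⁻¹ + (μ / 2) * (τ - ν i) ^ 2 := by
      funext τ; simp [hf, div_eq_mul_inv]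
    rw [hfe]
    exact ((hlog.const_mul (-β)).add (hinv.const_mul s)).add (hsq.const_mul (μ / 2))
  have hDval : -β * (1 / (T + 0)) + s * (-1 / (T + 0) ^ 2) + (μ / 2) * ((2:ℕ) * ((0:ℝ) - ν i) ^ (2 - 1) * 1)
      = -(μ * ζ + μ * ν i) := by
    rw [heq]
    field_simp
    ring
  rw [hDval] at hd
  have hDneg : -(μ * ζ + μ * ν i) < 0 := by nlinarith
  -- get small τ > 0 with f τ < f 0
  have hslope := hasDerivAt_iff_tendsto_slope.mp hd
  have hev : ∀ᶠ τ in nhdsWithin (0:ℝ) {(0:ℝ)}ᶜ, slope f 0 τ < 0 :=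
    hslope.eventually (eventually_lt_nhds hDneg)
  have hmono : nhdsWithin (0:ℝ) (Set.Ioi 0) ≤ nhdsWithin (0:ℝ) {(0:ℝ)}ᶜ :=
    nhdsWithin_mono 0 (fun x hx => ne_of_gt hx)
  have hev2 : ∀ᶠ τ in nhdsWithin (0:ℝ) (Set.Ioi 0), slope f 0 τ < 0 ∧ 0 < τ :=
    (hev.filter_mono hmono).and (eventually_mem_nhdsWithin)
  obtain ⟨τ, hsl, hτ0⟩ := hev2.exists
  have hfτ : f τ < f 0 := by
    have : (f τ - f 0) / (τ - 0) < 0 := by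
      have := hsl
      rwa [slope_def_field] at this
    rw [sub_zero] at this
    have := (div_neg_iff.mp this)
    rcases this with ⟨h1', h2'⟩ | ⟨h1', h2'⟩
    · linarith
    · linarith
  -- construct the perturbed point
  set x : Fin P → ℝ := fun j => if j = i then τ else xstar j with hx
  have hxnn : ∀ j, 0 ≤ x j := by
    intro j; by_cases h : j = i <;> simp [hx, h, le_of_lt hτ0, hpos j]
  have hxsum : ∑ j, x j = T + τ := by
    rw [hT]
    rw [← Finset.add_sum_erase _ x (Finset.mem_univ i),
        ← Finset.add_sum_erase _ xstar (Finset.mem_univ i)]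
    have : ∑ j ∈ Finset.univ.erase i, x j = ∑ j ∈ Finset.univ.erase i, xstar j := by
      apply Finset.sum_congr rfl
      intro j hj
      simp [hx, Finset.ne_of_mem_erase hj]
    rw [this]
    simp [hx, hxi]
    ring
  have hxsumpos : 0 < ∑ j, x j := by rw [hxsum]; linarith
  have hxsq : ∑ j, (x j - ν j) ^ 2
      = ∑ j, (xstar j - ν j) ^ 2 - (0 - ν i) ^ 2 + (τ - ν i) ^ 2 := by
    rw [← Finset.add_sum_erase _ (fun j => (x j - ν j)^2) (Finset.mem_univ i),
        ← Finset.add_sum_erase _ (fun j => (xstar j - ν j)^2) (Finset.mem_univ i)]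
    have : ∑ j ∈ Finset.univ.erase i, (x j - ν j)^2
        = ∑ j ∈ Finset.univ.erase i, (xstar j - ν j)^2 := by
      apply Finset.sum_congr rfl
      intro j hj
      simp [hx, Finset.ne_of_mem_erase hj]
    rw [this]
    simp [hx, hxi]
    ring
  have hmx := hmin x hxnn hxsumpos
  rw [hxsum, hxsq] at hmx
  have hf0 : f 0 = -β * Real.log T + s / T + (μ / 2) * (0 - ν i) ^ 2 := by
    simp [hf]
  have hfτ' : f τ = -β * Real.log (T + τ) + s / (T + τ) + (μ / 2) * (τ - ν i) ^ 2 := rfl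
  rw [hf0, hfτ'] at hfτ
  nlinarith [hmx, hfτ]
end
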